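/- arXiv:1908.08296 — 7 statements merged into one kernel-verified Lean document; each statement's English description precedes it below -/
import Mathlib

section
/- Let n ≥ 5 and let Φ ⊂ ℝ^n be the root system of type D_n with Weyl group W. Every unordered pair {r, r'} of orthogonal roots of Φ is W-conjugate to exactly one of the two pairs {e_1 − e_2, e_3 − e_4} and {e_{n−1} − e_n, e_{n−1} + e_n}: there exists w ∈ W with {w(r), w(r')} equal to one of these two pairs, and no element of W maps the pair {e_1 − e_2, e_3 − e_4} to the pair {e_{n−1} − e_n, e_{n−1} + e_n}. -/
namespace PaperD

/-- The `i`-th standard basis vector of `ℝ^n`. -/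
def e (n : ℕ) (i : Fin n) : Fin n → ℝ := Pi.single i 1

/-- The root system of type `D_n` inside `ℝ^n`: the vectors `±e_i ± e_j` for `i < j`. -/
def dRoots (n : ℕ) : Set (Fin n → ℝ) :=
  {v | ∃ i j : Fin n, i < j ∧ ∃ a b : ℝ,
      (a = 1 ∨ a = -1) ∧ (b = 1 ∨ b = -1) ∧ v = a • e n i + b • e n j}

/-- The Weyl group of type `D_n`: all transformations of `ℝ^n` that permute the coordinates
and change the signs of an even number of coordinates. -/
def dWeyl (n : ℕ) : Set ((Fin n → ℝ) → (Fin n → ℝ)) :=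
  {w | ∃ (σ : Equiv.Perm (Fin n)) (s : Fin n → ℝ),
      (∀ i, s i = 1 ∨ s i = -1) ∧ (∏ i, s i = 1) ∧
      ∀ v i, w v i = s i * v (σ⁻¹ i)}

/-- The unordered pair `{a, b}` is mapped to the unordered pair `{c, d}` by some element of
the Weyl group of type `D_n`. -/
def pairConj (n : ℕ) (a b c d : Fin n → ℝ) : Prop :=
  ∃ w ∈ dWeyl n, (w a = c ∧ w b = d) ∨ (w a = d ∧ w b = c)

lemma inj2 {α : Type*} {x0 x1 : α} (h01 : x0 ≠ x1) : Function.Injective ![x0, x1] := by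
  intro t t' h
  fin_cases t <;> fin_cases t' <;> simp_all

lemma inj4 {α : Type*} {x0 x1 x2 x3 : α} (h01 : x0 ≠ x1) (h02 : x0 ≠ x2) (h03 : x0 ≠ x3)
    (h12 : x1 ≠ x2) (h13 : x1 ≠ x3) (h23 : x2 ≠ x3) : Function.Injective ![x0, x1, x2, x3] := by
  intro t t' h
  fin_cases t <;> fin_cases t' <;> simp_all

lemma exists_perm {n m : ℕ} (x y : Fin m → Fin n) (hx : Function.Injective x)
    (hy : Function.Injective y) : ∃ σ : Equiv.Perm (Fin n), ∀ t, σ (x t) = y t := by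
  classical
  let ex := Equiv.ofInjective x hx
  let ey := Equiv.ofInjective y hy
  refine ⟨(ex.symm.trans ey).extendSubtype, fun t => ?_⟩
  have h1 : (x t) ∈ Set.range x := ⟨t, rfl⟩
  rw [Equiv.extendSubtype_apply_of_mem _ _ h1]
  have h2 : ex.symm ⟨x t, h1⟩ = t := by
    apply ex.injective; simp [ex, Equiv.ofInjective_apply]
  simp [Equiv.trans_apply, h2, ey, Equiv.ofInjective_apply]

lemma dot_formula {n : ℕ} (i j k l : Fin n) (a b c d : ℝ) :
    ∑ m, (a • e n i + b • e n j) m * (c • e n k + d • e n l) m =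
      (if i = k then a*c else 0) + (if i = l then a*d else 0) +
      (if j = k then b*c else 0) + (if j = l then b*d else 0) := by
  simp only [Pi.add_apply, Pi.smul_apply, smul_eq_mul, e, Pi.single_apply]
  rw [Finset.sum_congr rfl (g := fun m =>
    (a*c) * ((if m = i then (1:ℝ) else 0) * (if m = k then 1 else 0)) +
    (a*d) * ((if m = i then (1:ℝ) else 0) * (if m = l then 1 else 0)) +
    (b*c) * ((if m = j then (1:ℝ) else 0) * (if m = k then 1 else 0)) +
    (b*d) * ((if m = j then (1:ℝ) else 0) * (if m = l then 1 else 0)))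
    (fun m _ => by ring)]
  simp only [Finset.sum_add_distrib, ← Finset.mul_sum, ite_mul, one_mul, zero_mul,
    Finset.sum_ite_eq', Finset.mem_univ, if_true]
  congr 1
  · congr 1
    · congr 1 <;> split_ifs <;> try ring
    · split_ifs <;> ring
  · split_ifs <;> ring

lemma w_apply_root {n : ℕ} (σ : Equiv.Perm (Fin n)) (s : Fin n → ℝ) (i j : Fin n)
    (a b : ℝ) (hij : i ≠ j) :
    (fun m => s (σ⁻¹ m) * (a • e n i + b • e n j) (σ⁻¹ m)) =
      (s i * a) • e n (σ i) + (s j * b) • e n (σ j) := by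
  funext m
  obtain ⟨p, rfl⟩ : ∃ p, m = σ p := ⟨σ⁻¹ m, (σ.apply_symm_apply m).symm⟩
  simp only [Pi.add_apply, Pi.smul_apply, smul_eq_mul, e, Pi.single_apply,
    Equiv.Perm.inv_def, Equiv.symm_apply_apply, (Equiv.injective σ).eq_iff]
  rcases eq_or_ne p i with rfl | hpi <;> rcases eq_or_ne p j with rfl | hpj <;>
    simp_all <;> ring

lemma prod_three {n : ℕ} (i j z : Fin n) (a b c : ℝ) (hij : i ≠ j) (hiz : i ≠ z) (hjz : j ≠ z) :
    ∏ m, (if m = i then a else if m = j then b else if m = z then c else 1) = a * b * c := by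
  classical
  rw [← Finset.prod_subset (Finset.subset_univ ({i, j, z} : Finset (Fin n)))
    (fun x _ hx => by
      simp only [Finset.mem_insert, Finset.mem_singleton, not_or] at hx
      simp [hx.1, hx.2.1, hx.2.2])]
  rw [Finset.prod_insert (by simp [hij, hiz]), Finset.prod_insert (by simp [hjz]),
    Finset.prod_singleton]
  simp [hij.symm, hiz.symm, hjz.symm, mul_assoc]

lemma prod_five {n : ℕ} (i j k l z : Fin n) (a b c d f : ℝ)
    (hij : i ≠ j) (hik : i ≠ k) (hil : i ≠ l) (hiz : i ≠ z)
    (hjk : j ≠ k) (hjl : j ≠ l) (hjz : j ≠ z)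
    (hkl : k ≠ l) (hkz : k ≠ z) (hlz : l ≠ z) :
    ∏ m, (if m = i then a else if m = j then b else if m = k then c else
          if m = l then d else if m = z then f else 1) = a * b * c * d * f := by
  classical
  rw [← Finset.prod_subset (Finset.subset_univ ({i, j, k, l, z} : Finset (Fin n)))
    (fun x _ hx => by
      simp only [Finset.mem_insert, Finset.mem_singleton, not_or] at hx
      obtain ⟨h1, h2, h3, h4, h5⟩ := hx
      simp [h1, h2, h3, h4, h5])]
  rw [Finset.prod_insert (by simp [hij, hik, hil, hiz]),
    Finset.prod_insert (by simp [hjk, hjl, hjz]),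
    Finset.prod_insert (by simp [hkl, hkz]),
    Finset.prod_insert (by simp [hlz]), Finset.prod_singleton]
  simp only [if_pos rfl, if_true]
  rw [if_neg (Ne.symm hij), if_neg (Ne.symm hik), if_neg (Ne.symm hjk), if_neg (Ne.symm hil),
    if_neg (Ne.symm hjl), if_neg (Ne.symm hkl), if_neg (Ne.symm hiz), if_neg (Ne.symm hjz),
    if_neg (Ne.symm hkz), if_neg (Ne.symm hlz)]
  ring

lemma exists_notin {n : ℕ} (s : Finset (Fin n)) (h : s.card < n) : ∃ z, z ∉ s := by
  by_contra h'
  push_neg at h'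
  have hsub : (Finset.univ : Finset (Fin n)) ⊆ s := fun x _ => h' x
  have := Finset.card_le_card hsub
  simp at this
  omega

set_option maxHeartbeats 1000000 in
/-- For `n ≥ 5`, every unordered pair of orthogonal roots of `D_n` is Weyl-conjugate to
exactly one of the two pairs `{e₁ - e₂, e₃ - e₄}` and `{e_{n-1} - e_n, e_{n-1} + e_n}`:
it is conjugate to one of them, and no Weyl element maps the first pair to the second. -/
theorem orth_pair_classification_D (n : ℕ) (hn : 5 ≤ n)
    (r r' : Fin n → ℝ) (hr : r ∈ dRoots n) (hr' : r' ∈ dRoots n)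
    (horth : ∑ i, r i * r' i = 0) :
    (pairConj n r r'
        (e n ⟨0, by omega⟩ - e n ⟨1, by omega⟩) (e n ⟨2, by omega⟩ - e n ⟨3, by omega⟩) ∨
      pairConj n r r'
        (e n ⟨n - 2, by omega⟩ - e n ⟨n - 1, by omega⟩)
        (e n ⟨n - 2, by omega⟩ + e n ⟨n - 1, by omega⟩)) ∧
    ¬ pairConj n
        (e n ⟨0, by omega⟩ - e n ⟨1, by omega⟩) (e n ⟨2, by omega⟩ - e n ⟨3, by omega⟩)
        (e n ⟨n - 2, by omega⟩ - e n ⟨n - 1, by omega⟩)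
        (e n ⟨n - 2, by omega⟩ + e n ⟨n - 1, by omega⟩) := by
  classical
  constructor
  · -- existence
    obtain ⟨i, j, hij, a, b, ha, hb, hre⟩ := hr
    obtain ⟨k, l, hkl, c, d, hc, hd, hr'e⟩ := hr'
    have ha2 : a * a = 1 := by rcases ha with rfl | rfl <;> norm_num
    have hb2 : b * b = 1 := by rcases hb with rfl | rfl <;> norm_num
    have hc2 : c * c = 1 := by rcases hc with rfl | rfl <;> norm_num
    have hd2 : d * d = 1 := by rcases hd with rfl | rfl <;> norm_num
    have ha0 : a ≠ 0 := by rcases ha with rfl | rfl <;> norm_num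
    have hb0 : b ≠ 0 := by rcases hb with rfl | rfl <;> norm_num
    have hc0 : c ≠ 0 := by rcases hc with rfl | rfl <;> norm_num
    have hd0 : d ≠ 0 := by rcases hd with rfl | rfl <;> norm_num
    rw [hre, hr'e, dot_formula] at horth
    have hijv : (i : ℕ) < j := hij
    have hklv : (k : ℕ) < l := hkl
    have hdich : (i = k ∧ j = l ∧ a*c + b*d = 0) ∨ (i ≠ k ∧ i ≠ l ∧ j ≠ k ∧ j ≠ l) := by
      by_cases hik : i = k
      · have hik' : (i : ℕ) = k := by rw [hik]
        have hil : i ≠ l := by rw [Ne, Fin.ext_iff]; omega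
        have hjk : j ≠ k := by rw [Ne, Fin.ext_iff]; omega
        by_cases hjl : j = l
        · rw [if_pos hik, if_neg hil, if_neg hjk, if_pos hjl] at horth
          exact Or.inl ⟨hik, hjl, by linarith⟩
        · rw [if_pos hik, if_neg hil, if_neg hjk, if_neg hjl] at horth
          exact absurd (by linarith : a * c = 0) (mul_ne_zero ha0 hc0)
      · by_cases hil : i = l
        · have hil' : (i : ℕ) = l := by rw [hil]
          have hjk : j ≠ k := by rw [Ne, Fin.ext_iff]; omega
          have hjl : j ≠ l := by rw [Ne, Fin.ext_iff]; omega
          rw [if_neg hik, if_pos hil, if_neg hjk, if_neg hjl] at horth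
          exact absurd (by linarith : a * d = 0) (mul_ne_zero ha0 hd0)
        · by_cases hjk : j = k
          · have hjk' : (j : ℕ) = k := by rw [hjk]
            have hjl : j ≠ l := by rw [Ne, Fin.ext_iff]; omega
            rw [if_neg hik, if_neg hil, if_pos hjk, if_neg hjl] at horth
            exact absurd (by linarith : b * c = 0) (mul_ne_zero hb0 hc0)
          · by_cases hjl : j = l
            · rw [if_neg hik, if_neg hil, if_neg hjk, if_pos hjl] at horth
              exact absurd (by linarith : b * d = 0) (mul_ne_zero hb0 hd0)
            · exact Or.inr ⟨hik, hil, hjk, hjl⟩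
    rcases hdich with ⟨hik, hjl, heq⟩ | ⟨hik, hil, hjk, hjl⟩
    · -- same support: conjugate to the second pair
      right
      subst hik; subst hjl
      set n2 : Fin n := ⟨n - 2, by omega⟩ with hn2
      set n1 : Fin n := ⟨n - 1, by omega⟩ with hn1
      have hn21 : n2 ≠ n1 := by rw [Ne, Fin.ext_iff]; simp [hn2, hn1]; omega
      have hcd : (c = a ∧ d = -b) ∨ (c = -a ∧ d = b) := by
        rcases ha with rfl | rfl <;> rcases hb with rfl | rfl <;>
          rcases hc with rfl | rfl <;> rcases hd with rfl | rfl <;> norm_num at heq <;> norm_num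
      obtain ⟨z, hz⟩ := exists_notin ({i, j} : Finset (Fin n))
        (by
          have h1 := Finset.card_insert_le i ({j} : Finset (Fin n))
          simp only [Finset.card_singleton] at h1
          omega)
      simp only [Finset.mem_insert, Finset.mem_singleton, not_or] at hz
      have hiz : i ≠ z := fun h => hz.1 h.symm
      have hjz : j ≠ z := fun h => hz.2 h.symm
      obtain ⟨s', hs'⟩ : ∃ s' : Fin n → ℝ, ∀ p, s' p =
          (if p = i then a else if p = j then b else if p = z then a * b else 1) :=
        ⟨_, fun p => rfl⟩
      have hs'i : s' i = a := by rw [hs']; simp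
      have hs'j : s' j = b := by rw [hs']; simp [hij.ne']
      have hsigns : ∀ m : Fin n, s' m = 1 ∨ s' m = -1 := by
        intro m
        rw [hs']
        split_ifs
        · exact ha
        · exact hb
        · rcases ha with rfl | rfl <;> rcases hb with rfl | rfl <;> norm_num
        · left; rfl
      have hprod : ∏ m, s' m = 1 := by
        rw [Finset.prod_congr rfl (fun m _ => hs' m),
          prod_three i j z a b (a*b) hij.ne hiz hjz]
        linear_combination (b*b) * ha2 + hb2
      rcases hcd with ⟨hc', hd'⟩ | ⟨hc', hd'⟩
      · -- r' = a e_i - b e_j : send i ↦ n2, j ↦ n1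
        rw [hc', hd'] at hr'e
        obtain ⟨σ, hσ⟩ := exists_perm ![i, j] ![n2, n1]
          (inj2 hij.ne) (inj2 hn21)
        have hσi : σ i = n2 := by simpa using hσ 0
        have hσj : σ j = n1 := by simpa using hσ 1
        refine ⟨fun v m => s' (σ⁻¹ m) * v (σ⁻¹ m),
          ⟨σ, fun m => s' (σ⁻¹ m), fun m => hsigns _,
            by rw [Equiv.prod_comp σ⁻¹ s']; exact hprod, fun v m => rfl⟩, Or.inr ⟨?_, ?_⟩⟩
        · rw [hre]
          refine (w_apply_root σ s' i j a b hij.ne).trans ?_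
          rw [hσi, hσj, hs'i, hs'j, ha2, hb2, one_smul, one_smul]
        · rw [hr'e]
          refine (w_apply_root σ s' i j a (-b) hij.ne).trans ?_
          rw [hσi, hσj, hs'i, hs'j, ha2]
          have hmb : b * -b = -1 := by linear_combination -hb2
          rw [hmb, one_smul, neg_one_smul, ← sub_eq_add_neg]
      · -- r' = -a e_i + b e_j : send i ↦ n1, j ↦ n2
        rw [hc', hd'] at hr'e
        obtain ⟨σ, hσ⟩ := exists_perm ![i, j] ![n1, n2]
          (inj2 hij.ne) (inj2 hn21.symm)
        have hσi : σ i = n1 := by simpa using hσ 0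
        have hσj : σ j = n2 := by simpa using hσ 1
        refine ⟨fun v m => s' (σ⁻¹ m) * v (σ⁻¹ m),
          ⟨σ, fun m => s' (σ⁻¹ m), fun m => hsigns _,
            by rw [Equiv.prod_comp σ⁻¹ s']; exact hprod, fun v m => rfl⟩, Or.inr ⟨?_, ?_⟩⟩
        · rw [hre]
          refine (w_apply_root σ s' i j a b hij.ne).trans ?_
          rw [hσi, hσj, hs'i, hs'j, ha2, hb2, one_smul, one_smul, add_comm]
        · rw [hr'e]
          refine (w_apply_root σ s' i j (-a) b hij.ne).trans ?_
          rw [hσi, hσj, hs'i, hs'j, hb2]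
          have hma : a * -a = -1 := by linear_combination -ha2
          rw [hma, one_smul, neg_one_smul]
          abel
    · -- disjoint support: conjugate to the first pair
      left
      set t0 : Fin n := ⟨0, by omega⟩ with ht0
      set t1 : Fin n := ⟨1, by omega⟩ with ht1
      set t2 : Fin n := ⟨2, by omega⟩ with ht2
      set t3 : Fin n := ⟨3, by omega⟩ with ht3
      have hne01 : t0 ≠ t1 := by rw [Ne, Fin.ext_iff]; simp [ht0, ht1]
      have hne02 : t0 ≠ t2 := by rw [Ne, Fin.ext_iff]; simp [ht0, ht2]
      have hne03 : t0 ≠ t3 := by rw [Ne, Fin.ext_iff]; simp [ht0, ht3]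
      have hne12 : t1 ≠ t2 := by rw [Ne, Fin.ext_iff]; simp [ht1, ht2]
      have hne13 : t1 ≠ t3 := by rw [Ne, Fin.ext_iff]; simp [ht1, ht3]
      have hne23 : t2 ≠ t3 := by rw [Ne, Fin.ext_iff]; simp [ht2, ht3]
      obtain ⟨σ, hσ⟩ := exists_perm ![i, j, k, l] ![t0, t1, t2, t3]
        (inj4 hij.ne hik hil hjk hjl hkl.ne)
        (inj4 hne01 hne02 hne03 hne12 hne13 hne23)
      have hσi : σ i = t0 := by simpa using hσ 0
      have hσj : σ j = t1 := by simpa using hσ 1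
      have hσk : σ k = t2 := by simpa using hσ 2
      have hσl : σ l = t3 := by simpa using hσ 3
      obtain ⟨z, hz⟩ := exists_notin ({i, j, k, l} : Finset (Fin n))
        (by
          have h1 := Finset.card_insert_le i ({j, k, l} : Finset (Fin n))
          have h2 := Finset.card_insert_le j ({k, l} : Finset (Fin n))
          have h3 := Finset.card_insert_le k ({l} : Finset (Fin n))
          simp only [Finset.card_singleton] at h3
          omega)
      simp only [Finset.mem_insert, Finset.mem_singleton, not_or] at hz
      obtain ⟨hz1, hz2, hz3, hz4⟩ := hz
      have hiz : i ≠ z := fun h => hz1 h.symm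
      have hjz : j ≠ z := fun h => hz2 h.symm
      have hkz : k ≠ z := fun h => hz3 h.symm
      have hlz : l ≠ z := fun h => hz4 h.symm
      obtain ⟨s', hs'⟩ : ∃ s' : Fin n → ℝ, ∀ p, s' p =
          (if p = i then a else if p = j then -b else if p = k then c else
            if p = l then -d else if p = z then a * b * (c * d) else 1) :=
        ⟨_, fun p => rfl⟩
      have hs'i : s' i = a := by rw [hs']; simp
      have hs'j : s' j = -b := by rw [hs']; simp [hij.ne']
      have hs'k : s' k = c := by rw [hs']; simp [Ne.symm hik, Ne.symm hjk]
      have hs'l : s' l = -d := by rw [hs']; simp [Ne.symm hil, Ne.symm hjl, hkl.ne']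
      have hsigns : ∀ m : Fin n, s' m = 1 ∨ s' m = -1 := by
        intro m
        rw [hs']
        split_ifs
        · exact ha
        · rcases hb with rfl | rfl <;> norm_num
        · exact hc
        · rcases hd with rfl | rfl <;> norm_num
        · rcases ha with rfl | rfl <;> rcases hb with rfl | rfl <;>
            rcases hc with rfl | rfl <;> rcases hd with rfl | rfl <;> norm_num
        · left; rfl
      have hprod : ∏ m, s' m = 1 := by
        rw [Finset.prod_congr rfl (fun m _ => hs' m),
          prod_five i j k l z a (-b) c (-d) (a*b*(c*d)) hij.ne hik hil hiz hjk hjl hjz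
            hkl.ne hkz hlz]
        linear_combination (b*b*(c*c)*(d*d)) * ha2 + (c*c*(d*d)) * hb2 + (d*d) * hc2 + hd2
      refine ⟨fun v m => s' (σ⁻¹ m) * v (σ⁻¹ m),
        ⟨σ, fun m => s' (σ⁻¹ m), fun m => hsigns _,
          by rw [Equiv.prod_comp σ⁻¹ s']; exact hprod, fun v m => rfl⟩, Or.inl ⟨?_, ?_⟩⟩
      · rw [hre]
        refine (w_apply_root σ s' i j a b hij.ne).trans ?_
        rw [hσi, hσj, hs'i, hs'j, ha2]
        have hmb : -b * b = -1 := by linear_combination -hb2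
        rw [hmb, one_smul, neg_one_smul, ← sub_eq_add_neg]
      · rw [hr'e]
        refine (w_apply_root σ s' k l c d hkl.ne).trans ?_
        rw [hσk, hσl, hs'k, hs'l, hc2]
        have hmd : -d * d = -1 := by linear_combination -hd2
        rw [hmd, one_smul, neg_one_smul, ← sub_eq_add_neg]
  · -- non-conjugacy
    rintro ⟨w, ⟨σ, s, hs, -, hw⟩, hcase⟩
    set u := e n ⟨0, by omega⟩ - e n ⟨1, by omega⟩ with hu
    set v := e n ⟨2, by omega⟩ - e n ⟨3, by omega⟩ with hv
    have hsupp : ∀ q : Fin n, u q * v q = 0 := by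
      intro q
      rcases q with ⟨q, hq⟩
      simp only [hu, hv, e, Pi.sub_apply, Pi.single_apply, Fin.mk.injEq]
      split_ifs <;> first | (exfalso; omega) | norm_num
    have key : ∀ f g : Fin n → ℝ, w u = f → w v = g →
        f ⟨n - 2, by omega⟩ = 1 → g ⟨n - 2, by omega⟩ = 1 → False := by
      intro f g hf hg hf1 hg1
      have h1 : s ⟨n - 2, by omega⟩ * u (σ⁻¹ ⟨n - 2, by omega⟩) = 1 := by
        rw [← hw u, hf, hf1]
      have h2 : s ⟨n - 2, by omega⟩ * v (σ⁻¹ ⟨n - 2, by omega⟩) = 1 := by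
        rw [← hw v, hg, hg1]
      have hz := hsupp (σ⁻¹ ⟨n - 2, by omega⟩)
      have hune : u (σ⁻¹ ⟨n - 2, by omega⟩) ≠ 0 := fun h => by
        rw [h, mul_zero] at h1; norm_num at h1
      have hvne : v (σ⁻¹ ⟨n - 2, by omega⟩) ≠ 0 := fun h => by
        rw [h, mul_zero] at h2; norm_num at h2
      exact (mul_ne_zero hune hvne) hz
    have e1 : (e n ⟨n - 2, by omega⟩ - e n ⟨n - 1, by omega⟩) ⟨n - 2, by omega⟩ = 1 := by
      simp [e, Pi.single_apply, Fin.ext_iff]; omega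
    have e2 : (e n ⟨n - 2, by omega⟩ + e n ⟨n - 1, by omega⟩) ⟨n - 2, by omega⟩ = 1 := by
      simp [e, Pi.single_apply, Fin.ext_iff]; omega
    rcases hcase with ⟨hf, hg⟩ | ⟨hf, hg⟩
    · exact key _ _ hf hg e1 e2
    · exact key _ _ hf hg e2 e1

end PaperD
end

section
/- Let Φ ⊂ ℝ^4 be the root system of type D_4 with Weyl group W. Every unordered pair {r, r'} of orthogonal roots of Φ is W-conjugate to exactly one of the three pairs {e_1 − e_2, e_3 − e_4}, {e_1 − e_2, e_3 + e_4} and {e_3 − e_4, e_3 + e_4}: there exists w ∈ W mapping {r,r'} to one of these pairs, and no two of these three pairs are W-conjugate to each other. -/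
namespace PaperD4

/-- The `i`-th standard basis vector of `ℝ^n`. -/
def e (n : ℕ) (i : Fin n) : Fin n → ℝ := Pi.single i 1

/-- The root system of type `D_n` inside `ℝ^n`: the vectors `±e_i ± e_j` for `i < j`. -/
def dRoots (n : ℕ) : Set (Fin n → ℝ) :=
  {v | ∃ i j : Fin n, i < j ∧ ∃ a b : ℝ,
      (a = 1 ∨ a = -1) ∧ (b = 1 ∨ b = -1) ∧ v = a • e n i + b • e n j}

/-- The Weyl group of type `D_n`: all transformations of `ℝ^n` that permute the coordinates
and change the signs of an even number of coordinates. -/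
def dWeyl (n : ℕ) : Set ((Fin n → ℝ) → (Fin n → ℝ)) :=
  {w | ∃ (σ : Equiv.Perm (Fin n)) (s : Fin n → ℝ),
      (∀ i, s i = 1 ∨ s i = -1) ∧ (∏ i, s i = 1) ∧
      ∀ v i, w v i = s i * v (σ⁻¹ i)}

/-- The unordered pair `{a, b}` is mapped to the unordered pair `{c, d}` by some element of
the Weyl group of type `D_n`. -/
def pairConj (n : ℕ) (a b c d : Fin n → ℝ) : Prop :=
  ∃ w ∈ dWeyl n, (w a = c ∧ w b = d) ∨ (w a = d ∧ w b = c)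

/-- `e₁ - e₂` in `ℝ⁴`. -/
def f₁ : Fin 4 → ℝ := e 4 0 - e 4 1
/-- `e₃ - e₄` in `ℝ⁴`. -/
def f₂ : Fin 4 → ℝ := e 4 2 - e 4 3
/-- `e₃ + e₄` in `ℝ⁴`. -/
def f₃ : Fin 4 → ℝ := e 4 2 + e 4 3


lemma prod_invariant {w} (hw : w ∈ dWeyl 4) (v v' : Fin 4 → ℝ) :
    ∏ i, (w v i + w v' i) = ∏ i, (v i + v' i) := by
  obtain ⟨σ, s, hs, hprod, hwdef⟩ := hw
  have h : ∀ i, w v i + w v' i = s i * (v (σ⁻¹ i) + v' (σ⁻¹ i)) := fun i => by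
    rw [hwdef, hwdef]; ring
  simp only [h]
  rw [Finset.prod_mul_distrib, hprod, one_mul]
  exact Equiv.prod_comp σ⁻¹ (fun i => v i + v' i)

lemma P12 : ∏ i, (f₁ i + f₂ i) = 1 := by
  simp [Fin.prod_univ_four, f₁, f₂, e, Pi.single_apply]
lemma P13 : ∏ i, (f₁ i + f₃ i) = -1 := by
  simp [Fin.prod_univ_four, f₁, f₃, e, Pi.single_apply]
lemma P23 : ∏ i, (f₂ i + f₃ i) = 0 := by
  simp [Fin.prod_univ_four, f₂, f₃, e, Pi.single_apply]

lemma not_pairConj (x y u v : Fin 4 → ℝ) (hne : (∏ i, (x i + y i)) ≠ ∏ i, (u i + v i)) :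
    ¬ pairConj 4 u v x y := by
  rintro ⟨w, hw, ⟨h1, h2⟩ | ⟨h1, h2⟩⟩
  · have hP := prod_invariant hw u v
    rw [h1, h2] at hP
    exact hne hP
  · have hP := prod_invariant hw u v
    rw [h1, h2] at hP
    apply hne
    rw [← hP]
    exact Finset.prod_congr rfl (fun i _ => add_comm _ _)

lemma mk_mem_dWeyl (p : Equiv.Perm (Fin 4)) (u : Fin 4 → ℝ)
    (hu : ∀ i, u i = 1 ∨ u i = -1) (hprod : ∏ i, u i = 1) :
    (fun v i => u i * v (p i)) ∈ dWeyl 4 :=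
  ⟨p⁻¹, u, hu, hprod, fun v i => by simp⟩

lemma exists_perm (i j k l : Fin 4) (hij : i≠j) (hik : i≠k) (hil : i≠l)
    (hjk : j≠k) (hjl : j≠l) (hkl : k≠l) :
    ∃ p : Equiv.Perm (Fin 4), p 0 = i ∧ p 1 = j ∧ p 2 = k ∧ p 3 = l := by
  have hinj : Function.Injective ![i,j,k,l] := by
    intro x y hxy
    fin_cases x <;> fin_cases y <;> simp_all
  exact ⟨Equiv.ofBijective _ (Finite.injective_iff_bijective.mp hinj), rfl, rfl, rfl, rfl⟩

lemma root_apply (i j : Fin 4) (a b : ℝ) (m : Fin 4) :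
    (a • e 4 i + b • e 4 j) m = (if m = i then a else 0) + (if m = j then b else 0) := by
  simp [e, Pi.single_apply, mul_ite]

lemma exists_compl : ∀ i j : Fin 4, i ≠ j → ∃ k l : Fin 4,
    i≠k ∧ i≠l ∧ j≠k ∧ j≠l ∧ k≠l := by decide

lemma conj_disjoint (i j k l : Fin 4) (hij : i≠j) (hik : i≠k) (hil : i≠l)
    (hjk : j≠k) (hjl : j≠l) (hkl : k≠l) (a b c d : ℝ)
    (ha : a = 1 ∨ a = -1) (hb : b = 1 ∨ b = -1) (hc : c = 1 ∨ c = -1) (hd : d = 1 ∨ d = -1) :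
    (a*b*c*d = 1 → pairConj 4 (a • e 4 i + b • e 4 j) (c • e 4 k + d • e 4 l) f₁ f₂) ∧
    (a*b*c*d = -1 → pairConj 4 (a • e 4 i + b • e 4 j) (c • e 4 k + d • e 4 l) f₁ f₃) := by
  obtain ⟨p, hp0, hp1, hp2, hp3⟩ := exists_perm i j k l hij hik hil hjk hjl hkl
  have ha2 : a * a = 1 := by rcases ha with rfl|rfl <;> norm_num
  have hb2 : b * b = 1 := by rcases hb with rfl|rfl <;> norm_num
  have hc2 : c * c = 1 := by rcases hc with rfl|rfl <;> norm_num
  have hd2 : d * d = 1 := by rcases hd with rfl|rfl <;> norm_num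
  constructor
  · intro habcd
    refine ⟨_, mk_mem_dWeyl p ![a,-b,c,-d] ?_ ?_, Or.inl ⟨?_, ?_⟩⟩
    · intro m
      fin_cases m <;> rcases ha with rfl|rfl <;> rcases hb with rfl|rfl <;>
        rcases hc with rfl|rfl <;> rcases hd with rfl|rfl <;> norm_num
    · simp [Fin.prod_univ_four]
      linear_combination habcd
    · funext m
      fin_cases m <;>
        simp [hp0, hp1, hp2, hp3, root_apply, f₁, e, Pi.single_apply, hij, hik, hil, hjk, hjl,
          hkl, hij.symm, hik.symm, hil.symm, hjk.symm, hjl.symm, hkl.symm, ha2, hb2]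
    · funext m
      fin_cases m <;>
        simp [hp0, hp1, hp2, hp3, root_apply, f₂, e, Pi.single_apply, hij, hik, hil, hjk, hjl,
          hkl, hij.symm, hik.symm, hil.symm, hjk.symm, hjl.symm, hkl.symm, hc2, hd2]
  · intro habcd
    refine ⟨_, mk_mem_dWeyl p ![a,-b,c,d] ?_ ?_, Or.inl ⟨?_, ?_⟩⟩
    · intro m
      fin_cases m <;> rcases ha with rfl|rfl <;> rcases hb with rfl|rfl <;>
        rcases hc with rfl|rfl <;> rcases hd with rfl|rfl <;> norm_num
    · simp [Fin.prod_univ_four]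
      linear_combination -habcd
    · funext m
      fin_cases m <;>
        simp [hp0, hp1, hp2, hp3, root_apply, f₁, e, Pi.single_apply, hij, hik, hil, hjk, hjl,
          hkl, hij.symm, hik.symm, hil.symm, hjk.symm, hjl.symm, hkl.symm, ha2, hb2]
    · funext m
      fin_cases m <;>
        simp [hp0, hp1, hp2, hp3, root_apply, f₃, e, Pi.single_apply, hij, hik, hil, hjk, hjl,
          hkl, hij.symm, hik.symm, hil.symm, hjk.symm, hjl.symm, hkl.symm, hc2, hd2]

lemma conj_same (i j : Fin 4) (hij : i ≠ j) (a b c d : ℝ)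
    (ha : a = 1 ∨ a = -1) (hb : b = 1 ∨ b = -1) (hc : c = 1 ∨ c = -1) (hd : d = 1 ∨ d = -1)
    (h : a*c + b*d = 0) :
    pairConj 4 (a • e 4 i + b • e 4 j) (c • e 4 i + d • e 4 j) f₂ f₃ := by
  obtain ⟨k, l, hik, hil, hjk, hjl, hkl⟩ := exists_compl i j hij
  have ha2 : a * a = 1 := by rcases ha with rfl|rfl <;> norm_num
  have hb2 : b * b = 1 := by rcases hb with rfl|rfl <;> norm_num
  have hcase : (c = a ∧ d = -b) ∨ (c = -a ∧ d = b) := by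
    rcases ha with rfl|rfl <;> rcases hb with rfl|rfl <;> rcases hc with rfl|rfl <;>
      rcases hd with rfl|rfl <;> norm_num at h <;> norm_num
  rcases hcase with ⟨hc', hd'⟩ | ⟨hc', hd'⟩
  · obtain ⟨p, hp0, hp1, hp2, hp3⟩ := exists_perm k l i j hkl hik.symm hjk.symm hil.symm hjl.symm hij
    refine ⟨_, mk_mem_dWeyl p ![a*b, 1, a, b] ?_ ?_, Or.inr ⟨?_, ?_⟩⟩
    · intro m
      fin_cases m <;> rcases ha with rfl|rfl <;> rcases hb with rfl|rfl <;> norm_num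
    · simp only [Fin.prod_univ_four, Matrix.cons_val_zero, Matrix.cons_val_one, Matrix.head_cons,
        Matrix.cons_val_two, Matrix.tail_cons, Matrix.cons_val_three]
      linear_combination (b*b)*ha2 + hb2
    · funext m
      fin_cases m <;>
        simp [hp0, hp1, hp2, hp3, hc', hd', root_apply, f₃, e, Pi.single_apply, hij, hik, hil,
          hjk, hjl, hkl, hij.symm, hik.symm, hil.symm, hjk.symm, hjl.symm, hkl.symm, ha2, hb2]
    · funext m
      fin_cases m <;>
        simp [hp0, hp1, hp2, hp3, hc', hd', root_apply, f₂, e, Pi.single_apply, hij, hik, hil,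
          hjk, hjl, hkl, hij.symm, hik.symm, hil.symm, hjk.symm, hjl.symm, hkl.symm, ha2, hb2]
  · obtain ⟨p, hp0, hp1, hp2, hp3⟩ := exists_perm k l j i hkl hjk.symm hik.symm hjl.symm hil.symm hij.symm
    refine ⟨_, mk_mem_dWeyl p ![a*b, 1, b, a] ?_ ?_, Or.inr ⟨?_, ?_⟩⟩
    · intro m
      fin_cases m <;> rcases ha with rfl|rfl <;> rcases hb with rfl|rfl <;> norm_num
    · simp only [Fin.prod_univ_four, Matrix.cons_val_zero, Matrix.cons_val_one, Matrix.head_cons,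
        Matrix.cons_val_two, Matrix.tail_cons, Matrix.cons_val_three]
      linear_combination (b*b)*ha2 + hb2
    · funext m
      fin_cases m <;>
        simp [hp0, hp1, hp2, hp3, hc', hd', root_apply, f₃, e, Pi.single_apply, hij, hik, hil,
          hjk, hjl, hkl, hij.symm, hik.symm, hil.symm, hjk.symm, hjl.symm, hkl.symm, ha2, hb2]
    · funext m
      fin_cases m <;>
        simp [hp0, hp1, hp2, hp3, hc', hd', root_apply, f₂, e, Pi.single_apply, hij, hik, hil,
          hjk, hjl, hkl, hij.symm, hik.symm, hil.symm, hjk.symm, hjl.symm, hkl.symm, ha2, hb2]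

lemma sum_ite_ite (i k : Fin 4) (x y : ℝ) :
    ∑ m : Fin 4, (if m = i then x else 0) * (if m = k then y else 0)
      = if i = k then x*y else 0 := by
  rw [Finset.sum_eq_single i]
  · simp
  · intro m _ hm; simp [hm]
  · simp

lemma orth_cases (i j k l : Fin 4) (hij : i < j) (hkl : k < l) (a b c d : ℝ)
    (ha : a = 1 ∨ a = -1) (hb : b = 1 ∨ b = -1) (hc : c = 1 ∨ c = -1) (hd : d = 1 ∨ d = -1)
    (h : ∑ m, (a • e 4 i + b • e 4 j) m * (c • e 4 k + d • e 4 l) m = 0) :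
    (i = k ∧ j = l ∧ a*c + b*d = 0) ∨ (i ≠ k ∧ i ≠ l ∧ j ≠ k ∧ j ≠ l) := by
  have expand : ∀ m : Fin 4, (a • e 4 i + b • e 4 j) m * (c • e 4 k + d • e 4 l) m
      = (if m = i then a else 0) * (if m = k then c else 0)
        + (if m = i then a else 0) * (if m = l then d else 0)
        + (if m = j then b else 0) * (if m = k then c else 0)
        + (if m = j then b else 0) * (if m = l then d else 0) := fun m => by
    rw [root_apply, root_apply]; ring
  rw [Finset.sum_congr rfl (fun m _ => expand m)] at h
  rw [Finset.sum_add_distrib, Finset.sum_add_distrib, Finset.sum_add_distrib,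
    sum_ite_ite, sum_ite_ite, sum_ite_ite, sum_ite_ite] at h
  have hklne : k ≠ l := ne_of_lt hkl
  have hlkne : l ≠ k := (ne_of_lt hkl).symm
  have hijne : i ≠ j := ne_of_lt hij
  have hjine : j ≠ i := (ne_of_lt hij).symm
  by_cases h1 : i = k <;> by_cases h2 : i = l <;> by_cases h3 : j = k <;> by_cases h4 : j = l <;>
    simp only [h1, h2, h3, h4, hklne, hlkne, hijne, hjine, if_true, if_false, ite_true,
      ite_false, if_neg, add_zero, zero_add] at h <;>
    first
      | (exfalso; simp only [Fin.lt_def, Fin.ext_iff] at hij hkl h1 h2 h3 h4; omega)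
      | (exact Or.inl ⟨h1, h4, by linarith⟩)
      | (exact Or.inr ⟨h1, h2, h3, h4⟩)
      | (exfalso; rcases ha with rfl|rfl <;> rcases hb with rfl|rfl <;> rcases hc with rfl|rfl <;>
          rcases hd with rfl|rfl <;> norm_num at h)

/-- Every unordered pair of orthogonal roots of `D_4` is Weyl-conjugate to exactly one of the
three pairs `{e₁ - e₂, e₃ - e₄}`, `{e₁ - e₂, e₃ + e₄}` and `{e₃ - e₄, e₃ + e₄}`:
it is conjugate to one of them, and no two of these three pairs are Weyl-conjugate. -/
theorem orth_pair_classification_D4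
    (r r' : Fin 4 → ℝ) (hr : r ∈ dRoots 4) (hr' : r' ∈ dRoots 4)
    (horth : ∑ i, r i * r' i = 0) :
    (pairConj 4 r r' f₁ f₂ ∨ pairConj 4 r r' f₁ f₃ ∨ pairConj 4 r r' f₂ f₃) ∧
    ¬ pairConj 4 f₁ f₂ f₁ f₃ ∧ ¬ pairConj 4 f₁ f₂ f₂ f₃ ∧ ¬ pairConj 4 f₁ f₃ f₂ f₃ ∧
    ¬ pairConj 4 f₁ f₃ f₁ f₂ ∧ ¬ pairConj 4 f₂ f₃ f₁ f₂ ∧ ¬ pairConj 4 f₂ f₃ f₁ f₃ := by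
  obtain ⟨i, j, hij, a, b, ha, hb, rfl⟩ := hr
  obtain ⟨k, l, hkl, c, d, hc, hd, rfl⟩ := hr'
  refine ⟨?_, ?_, ?_, ?_, ?_, ?_, ?_⟩
  · rcases orth_cases i j k l hij hkl a b c d ha hb hc hd horth with ⟨rfl, rfl, h0⟩ | ⟨h1,h2,h3,h4⟩
    · exact Or.inr (Or.inr (conj_same i j (ne_of_lt hij) a b c d ha hb hc hd h0))
    · have habcd : a*b*c*d = 1 ∨ a*b*c*d = -1 := by
        rcases ha with rfl|rfl <;> rcases hb with rfl|rfl <;> rcases hc with rfl|rfl <;>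
          rcases hd with rfl|rfl <;> norm_num
      have hC := conj_disjoint i j k l (ne_of_lt hij) h1 h2 h3 h4 (ne_of_lt hkl)
        a b c d ha hb hc hd
      rcases habcd with h|h
      · exact Or.inl (hC.1 h)
      · exact Or.inr (Or.inl (hC.2 h))
  · exact not_pairConj f₁ f₃ f₁ f₂ (by rw [P13, P12]; norm_num)
  · exact not_pairConj f₂ f₃ f₁ f₂ (by rw [P23, P12]; norm_num)
  · exact not_pairConj f₂ f₃ f₁ f₃ (by rw [P23, P13]; norm_num)
  · exact not_pairConj f₁ f₂ f₁ f₃ (by rw [P12, P13]; norm_num)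
  · exact not_pairConj f₁ f₂ f₂ f₃ (by rw [P12, P23]; norm_num)
  · exact not_pairConj f₁ f₃ f₂ f₃ (by rw [P13, P23]; norm_num)


end PaperD4
end

section
/- Let Φ be a reduced crystallographic simply-laced root system with base Δ and Weyl group W. For any two orthogonal roots r, r' ∈ Φ (i.e. ⟨r,r'⟩ = 0) there exist w ∈ W and simple roots α, α' ∈ Δ with ⟨α,α'⟩ = 0 such that w(r) = α and w(r') = α'. (Paper's Corollary: any pair of orthogonal roots in a simply-laced 𝔤 is Weyl-conjugate to a pair of orthogonal simple roots.) -/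
open scoped InnerProductSpace

namespace PaperRS

variable {E : Type*} [NormedAddCommGroup E] [InnerProductSpace ℝ E]

/-- A reduced crystallographic simply-laced root system, normalized so that every root has
squared length `2` (hence `⟪δ, ε⟫` is the Cartan integer `⟨δ, ε^∨⟩`). -/
structure IsRootSystem (Φ : Set E) : Prop where
  finite : Φ.Finite
  nonzero : (0 : E) ∉ Φ
  span_top : Submodule.span ℝ Φ = ⊤
  norm_two : ∀ α ∈ Φ, ⟪α, α⟫_ℝ = 2
  reduced : ∀ α ∈ Φ, ∀ t : ℝ, t • α ∈ Φ → t = 1 ∨ t = -1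
  cartan_int : ∀ α ∈ Φ, ∀ β ∈ Φ, ∃ n : ℤ, ⟪α, β⟫_ℝ = (n : ℝ)
  reflect_mem : ∀ α ∈ Φ, ∀ β ∈ Φ, β - ⟪β, α⟫_ℝ • α ∈ Φ

/-- Irreducibility: `Φ` is nonempty and cannot be split into two mutually orthogonal parts. -/
def IsIrreducible (Φ : Set E) : Prop :=
  Φ.Nonempty ∧ ∀ Φ₁ Φ₂ : Set E, Φ = Φ₁ ∪ Φ₂ →
    (∀ a ∈ Φ₁, ∀ b ∈ Φ₂, ⟪a, b⟫_ℝ = 0) → Φ₁ = ∅ ∨ Φ₂ = ∅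

/-- The reflection in (the hyperplane orthogonal to) a root `α` of squared length `2`. -/
def sRefl (α : E) : Function.End E := fun x => x - ⟪x, α⟫_ℝ • α

/-- The group generated by the reflections in the elements of `S`; since every reflection is
an involution, the submonoid generated by the reflections coincides with the generated group. -/
def genBy (S : Set E) : Submonoid (Function.End E) :=
  Submonoid.closure (sRefl '' S)

/-- The Weyl group of `Φ`: the group generated by the reflections in all the roots. -/
abbrev WeylGroup (Φ : Set E) : Submonoid (Function.End E) := genBy Φ

/-- A base (set of simple roots) of `Φ`, together with the (unique) integer coefficients
`coeff δ γ` of each root `δ` with respect to the simple roots. -/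
structure Base (Φ : Set E) where
  Δ : Finset E
  coeff : E → E → ℤ
  subset : ↑Δ ⊆ Φ
  indep : LinearIndependent ℝ (fun γ : {x : E // x ∈ Δ} => (γ : E))
  expand : ∀ δ ∈ Φ, δ = ∑ γ ∈ Δ, (coeff δ γ : ℝ) • γ
  sign : ∀ δ ∈ Φ, (∀ γ ∈ Δ, 0 ≤ coeff δ γ) ∨ (∀ γ ∈ Δ, coeff δ γ ≤ 0)

variable {Φ : Set E}

/-- `θ` is the highest root of `Φ` with respect to the base `B`. -/
def IsHighest (B : Base Φ) (θ : E) : Prop :=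
  θ ∈ Φ ∧ ∀ δ ∈ Φ, ∀ γ ∈ B.Δ, B.coeff δ γ ≤ B.coeff θ γ

/-- `α` is a Heisenberg simple root: the highest root `θ` has `α`-coefficient `2`, and every
root other than `±θ` has `α`-coefficient in `{-1, 0, 1}`. -/
def IsHeisenberg (B : Base Φ) (θ α : E) : Prop :=
  B.coeff θ α = 2 ∧
    ∀ δ ∈ Φ, δ ≠ θ → δ ≠ -θ →
      B.coeff δ α = -1 ∨ B.coeff δ α = 0 ∨ B.coeff δ α = 1

/-- `α` is an extreme simple root with (unique) neighbour `β`. -/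
def IsExtreme (B : Base Φ) (α β : E) : Prop :=
  β ∈ B.Δ ∧ β ≠ α ∧ ⟪α, β⟫_ℝ ≠ 0 ∧
    ∀ γ ∈ B.Δ, γ ≠ α → ⟪α, γ⟫_ℝ ≠ 0 → γ = β

/-- `Φ_α`: the roots with `α`-coefficient `1` that are orthogonal to `α`. -/
def PhiSet (B : Base Φ) (α : E) : Set E :=
  {ε ∈ Φ | B.coeff ε α = 1 ∧ ⟪ε, α⟫_ℝ = 0}

/-- `Ψ_α`: the roots `ε` with `α`-coefficient `1` and `⟪ε, α⟫ ≤ 0`. -/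
def PsiSet (B : Base Φ) (α : E) : Set E :=
  {ε ∈ Φ | B.coeff ε α = 1 ∧ ⟪ε, α⟫_ℝ ≤ 0}

section Aux

open scoped Classical

variable {α δ γ γ₀ s t u r r' : E}

lemma sRefl_def (α x : E) : sRefl α x = x - ⟪x, α⟫_ℝ • α := rfl

lemma sRefl_add (α x y : E) : sRefl α (x + y) = sRefl α x + sRefl α y := by
  simp only [sRefl_def, inner_add_left]; module

lemma sRefl_smul (α : E) (c : ℝ) (x : E) : sRefl α (c • x) = c • sRefl α x := by
  simp only [sRefl_def, real_inner_smul_left, smul_sub, smul_smul]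

lemma sRefl_selfadj (α x y : E) : ⟪sRefl α x, y⟫_ℝ = ⟪x, sRefl α y⟫_ℝ := by
  simp only [sRefl_def, inner_sub_left, inner_sub_right, real_inner_smul_left,
    real_inner_smul_right]
  rw [real_inner_comm α y]
  ring

lemma sRefl_invol (hαα : ⟪α, α⟫_ℝ = 2) (x : E) : sRefl α (sRefl α x) = x := by
  simp only [sRefl_def, inner_sub_left, real_inner_smul_left, hαα]
  module

lemma sRefl_inner (hαα : ⟪α, α⟫_ℝ = 2) (x y : E) :
    ⟪sRefl α x, sRefl α y⟫_ℝ = ⟪x, y⟫_ℝ := by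
  simp only [sRefl_def, inner_sub_left, inner_sub_right, real_inner_smul_left,
    real_inner_smul_right, hαα]
  rw [real_inner_comm α y]
  ring

/-- Every element of the Weyl group is linear, preserves the inner product, maps `Φ` to `Φ`,
and has a two-sided inverse in the Weyl group. -/
def Wnice (Φ : Set E) (w : Function.End E) : Prop :=
  (∀ x y : E, w (x + y) = w x + w y) ∧ (∀ (c : ℝ) (x : E), w (c • x) = c • w x) ∧
  (∀ x y : E, ⟪w x, w y⟫_ℝ = ⟪x, y⟫_ℝ) ∧ (∀ δ ∈ Φ, w δ ∈ Φ) ∧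
  ∃ w' ∈ WeylGroup Φ, (∀ x, w' (w x) = x) ∧ (∀ x, w (w' x) = x)

lemma wnice_of_mem (hΦ : IsRootSystem Φ) {w : Function.End E} (hw : w ∈ WeylGroup Φ) :
    Wnice Φ w := by
  refine Submonoid.closure_induction ?_ ?_ ?_ hw
  · rintro x ⟨β, hβ, rfl⟩
    have hββ := hΦ.norm_two β hβ
    refine ⟨sRefl_add β, sRefl_smul β, sRefl_inner hββ, fun δ hδ => hΦ.reflect_mem β hβ δ hδ,
      sRefl β, Submonoid.subset_closure ⟨β, hβ, rfl⟩, sRefl_invol hββ, sRefl_invol hββ⟩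
  · exact ⟨fun _ _ => rfl, fun _ _ => rfl, fun _ _ => rfl, fun δ hδ => hδ,
      1, one_mem _, fun _ => rfl, fun _ => rfl⟩
  · rintro x y hx hy ⟨hxa, hxs, hxi, hxm, x', hx'W, hx'l, hx'r⟩
      ⟨hya, hys, hyi, hym, y', hy'W, hy'l, hy'r⟩
    refine ⟨fun a b => ?_, fun c a => ?_, fun a b => ?_, fun δ hδ => ?_,
      y' * x', mul_mem hy'W hx'W, fun a => ?_, fun a => ?_⟩
    · show x (y (a + b)) = x (y a) + x (y b); rw [hya, hxa]
    · show x (y (c • a)) = c • x (y a); rw [hys, hxs]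
    · show ⟪x (y a), x (y b)⟫_ℝ = ⟪a, b⟫_ℝ; rw [hxi, hyi]
    · exact hxm _ (hym _ hδ)
    · show y' (x' (x (y a))) = a; rw [hx'l, hy'l]
    · show x (y (y' (x' a))) = a; rw [hy'r, hx'r]

lemma neg_mem (hΦ : IsRootSystem Φ) (hδ : δ ∈ Φ) : -δ ∈ Φ := by
  have h := hΦ.reflect_mem δ hδ δ hδ
  rw [hΦ.norm_two δ hδ, show δ - (2:ℝ) • δ = -δ by module] at h
  exact h

lemma coeff_unique (B : Base Φ) {c d : E → ℝ} (h : ∑ γ ∈ B.Δ, c γ • γ = ∑ γ ∈ B.Δ, d γ • γ) :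
    ∀ γ ∈ B.Δ, c γ = d γ := by
  have hli := B.indep
  rw [Fintype.linearIndependent_iff] at hli
  have key := hli (fun γ => c γ - d γ) ?_
  · intro γ hγ
    have h0 := key ⟨γ, hγ⟩
    have : c γ - d γ = 0 := h0
    linarith
  · have : ∑ i : {x : E // x ∈ B.Δ}, (c i - d i) • (i : E)
        = (∑ i : {x : E // x ∈ B.Δ}, c i • (i : E)) - ∑ i : {x : E // x ∈ B.Δ}, d i • (i : E) := by
      rw [← Finset.sum_sub_distrib]
      exact Finset.sum_congr rfl fun i _ => sub_smul _ _ _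
    rw [this, Finset.sum_coe_sort B.Δ (fun γ => c γ • γ),
      Finset.sum_coe_sort B.Δ (fun γ => d γ • γ), h, sub_self]

lemma coeff_neg (hΦ : IsRootSystem Φ) (B : Base Φ) (hδ : δ ∈ Φ) : ∀ γ ∈ B.Δ, B.coeff (-δ) γ = - B.coeff δ γ := by
  have h1 := B.expand (-δ) (neg_mem hΦ hδ)
  have h2 := B.expand δ hδ
  have h3 : ∑ γ ∈ B.Δ, ((B.coeff (-δ) γ : ℝ)) • γ = ∑ γ ∈ B.Δ, (-(B.coeff δ γ : ℝ)) • γ := by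
    rw [← h1]
    simp only [neg_smul]
    rw [Finset.sum_neg_distrib, ← h2]
  intro γ hγ
  exact_mod_cast coeff_unique B h3 γ hγ

lemma coeff_base (B : Base Φ) (hγ₀ : γ₀ ∈ B.Δ) (hγ : γ ∈ B.Δ) :
    B.coeff γ₀ γ = if γ = γ₀ then 1 else 0 := by
  have h2 : ∑ γ ∈ B.Δ, (if γ = γ₀ then (1:ℝ) else 0) • γ = γ₀ := by
    simp only [ite_smul, one_smul, zero_smul]
    rw [Finset.sum_ite_eq' B.Δ γ₀ (fun γ => γ)]
    simp [hγ₀]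
  have h := coeff_unique B (h2.trans (B.expand γ₀ (B.subset hγ₀))) γ hγ
  by_cases e : γ = γ₀ <;> simp only [e, if_true, if_false] at h ⊢ <;> exact_mod_cast h.symm

/-- The set of positive roots with respect to the base `B`. -/
noncomputable def PosR (hΦ : IsRootSystem Φ) (B : Base Φ) : Finset E :=
  hΦ.finite.toFinset.filter fun δ => ∀ γ ∈ B.Δ, 0 ≤ B.coeff δ γ

lemma mem_posR (hΦ : IsRootSystem Φ) (B : Base Φ) {δ : E} :
    δ ∈ PosR hΦ B ↔ δ ∈ Φ ∧ ∀ γ ∈ B.Δ, 0 ≤ B.coeff δ γ := by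
  simp [PosR, Set.Finite.mem_toFinset]

lemma posR_subset (hΦ : IsRootSystem Φ) (B : Base Φ) {δ : E} (h : δ ∈ PosR hΦ B) : δ ∈ Φ :=
  ((mem_posR hΦ B).1 h).1

lemma base_mem_posR (hΦ : IsRootSystem Φ) (B : Base Φ) (hγ : γ ∈ B.Δ) : γ ∈ PosR hΦ B :=
  (mem_posR hΦ B).2 ⟨B.subset hγ, fun γ' h' => by
    rw [coeff_base B hγ h']; split <;> norm_num⟩

lemma posR_or_neg (hΦ : IsRootSystem Φ) (B : Base Φ) (hδ : δ ∈ Φ) :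
    δ ∈ PosR hΦ B ∨ -δ ∈ PosR hΦ B := by
  rcases B.sign δ hδ with h | h
  · exact Or.inl ((mem_posR hΦ B).2 ⟨hδ, h⟩)
  · refine Or.inr ((mem_posR hΦ B).2 ⟨neg_mem hΦ hδ, fun γ hγ => ?_⟩)
    rw [coeff_neg hΦ B hδ γ hγ]
    linarith [h γ hγ]

lemma not_both_posR (hΦ : IsRootSystem Φ) (B : Base Φ) (hδ : δ ∈ Φ)
    (h1 : δ ∈ PosR hΦ B) (h2 : -δ ∈ PosR hΦ B) : False := by
  have hp1 := ((mem_posR hΦ B).1 h1).2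
  have hp2 := ((mem_posR hΦ B).1 h2).2
  have hz : ∀ γ ∈ B.Δ, (B.coeff δ γ : ℝ) = 0 := by
    intro γ hγ
    have := hp2 γ hγ
    rw [coeff_neg hΦ B hδ γ hγ] at this
    have := hp1 γ hγ
    exact_mod_cast le_antisymm (by omega) (by exact_mod_cast hp1 γ hγ)
  have hδ0 : δ = 0 := by
    rw [B.expand δ hδ]
    apply Finset.sum_eq_zero
    intro γ hγ
    rw [hz γ hγ, zero_smul]
  exact hΦ.nonzero (hδ0 ▸ hδ)

lemma inner_coeff (hΦ : IsRootSystem Φ) (B : Base Φ) (v : E) (hδ : δ ∈ Φ) :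
    ⟪v, δ⟫_ℝ = ∑ γ ∈ B.Δ, (B.coeff δ γ : ℝ) * ⟪v, γ⟫_ℝ := by
  conv_lhs => rw [B.expand δ hδ]
  rw [inner_sum]
  exact Finset.sum_congr rfl fun γ _ => real_inner_smul_right _ _ _

lemma collapse (hΦ : IsRootSystem Φ) (B : Base Φ) (hδ : δ ∈ Φ) (hγ₀ : γ₀ ∈ B.Δ)
    (h : ∀ γ ∈ B.Δ, γ ≠ γ₀ → B.coeff δ γ = 0) : δ = γ₀ ∨ δ = -γ₀ := by
  have hcol : δ = (B.coeff δ γ₀ : ℝ) • γ₀ := by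
    conv_lhs => rw [B.expand δ hδ]
    exact Finset.sum_eq_single γ₀ (fun γ hγ hne => by rw [h γ hγ hne]; simp)
      (fun habs => absurd hγ₀ habs)
  rcases hΦ.reduced γ₀ (B.subset hγ₀) (B.coeff δ γ₀ : ℝ) (by rw [← hcol]; exact hδ) with h1 | h1 <;>
    rw [hcol, h1]
  · exact Or.inl (one_smul _ _)
  · exact Or.inr (by module)

lemma inner_le_two (hΦ : IsRootSystem Φ) (hs : s ∈ Φ) (ht : t ∈ Φ) : ⟪s, t⟫_ℝ ≤ 2 := by
  have h := real_inner_self_nonneg (x := s - t)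
  rw [real_inner_sub_sub_self, hΦ.norm_two s hs, hΦ.norm_two t ht] at h
  linarith

lemma inner_ge_neg_two (hΦ : IsRootSystem Φ) (hs : s ∈ Φ) (ht : t ∈ Φ) : -2 ≤ ⟪s, t⟫_ℝ := by
  have h := real_inner_self_nonneg (x := s + t)
  rw [real_inner_add_add_self, hΦ.norm_two s hs, hΦ.norm_two t ht] at h
  linarith

lemma eq_of_inner_two (hΦ : IsRootSystem Φ) (hs : s ∈ Φ) (ht : t ∈ Φ)
    (h : ⟪s, t⟫_ℝ = 2) : s = t := by
  have h0 : ⟪s - t, s - t⟫_ℝ = 0 := by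
    rw [real_inner_sub_sub_self, hΦ.norm_two s hs, hΦ.norm_two t ht, h]; ring
  have := inner_self_eq_zero.1 h0
  rwa [sub_eq_zero] at this

lemma inner_eq_one (hΦ : IsRootSystem Φ) (hs : s ∈ Φ) (ht : t ∈ Φ)
    (hpos : 0 < ⟪s, t⟫_ℝ) (hne : s ≠ t) : ⟪s, t⟫_ℝ = 1 := by
  obtain ⟨n, hn⟩ := hΦ.cartan_int s hs t ht
  have h2 : ⟪s, t⟫_ℝ ≤ 2 := inner_le_two hΦ hs ht
  have hne2 : ⟪s, t⟫_ℝ ≠ 2 := fun h => hne (eq_of_inner_two hΦ hs ht h)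
  rw [hn] at hpos h2 hne2 ⊢
  have hn1 : n = 1 := by
    have : (0:ℤ) < n := by exact_mod_cast hpos
    have : n ≤ 2 := by exact_mod_cast h2
    have : n ≠ 2 := fun h => hne2 (by rw [h]; norm_num)
    omega
  rw [hn1]; norm_num

lemma coeff_sRefl (hΦ : IsRootSystem Φ) (B : Base Φ) (hα : α ∈ B.Δ) (hδ : δ ∈ Φ) {n : ℤ}
    (hn : ⟪δ, α⟫_ℝ = (n : ℝ)) :
    ∀ γ ∈ B.Δ, B.coeff (sRefl α δ) γ = B.coeff δ γ - if γ = α then n else 0 := by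
  have hαΦ := B.subset hα
  have hεΦ : sRefl α δ ∈ Φ := hΦ.reflect_mem α hαΦ δ hδ
  have key : ∑ γ ∈ B.Δ, (B.coeff (sRefl α δ) γ : ℝ) • γ
      = ∑ γ ∈ B.Δ, ((B.coeff δ γ : ℝ) - if γ = α then (n : ℝ) else 0) • γ := by
    rw [← B.expand _ hεΦ]
    have h1 : ∑ γ ∈ B.Δ, ((B.coeff δ γ : ℝ) - if γ = α then (n : ℝ) else 0) • γ
        = (∑ γ ∈ B.Δ, (B.coeff δ γ : ℝ) • γ) - ∑ γ ∈ B.Δ, (if γ = α then (n : ℝ) else 0) • γ := by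
      rw [← Finset.sum_sub_distrib]
      exact Finset.sum_congr rfl fun γ _ => sub_smul _ _ _
    have h2 : ∑ γ ∈ B.Δ, (if γ = α then (n : ℝ) else 0) • γ = (n : ℝ) • α := by
      simp only [ite_smul, zero_smul]
      rw [Finset.sum_ite_eq' B.Δ α (fun γ => (n : ℝ) • γ)]
      simp [hα]
    rw [h1, h2, ← B.expand δ hδ, sRefl_def, hn]
  intro γ hγ
  have h := coeff_unique B key γ hγ
  by_cases e : γ = α <;> simp only [e, if_true, if_false] at h ⊢ <;> exact_mod_cast h

lemma sRefl_base_posR (hΦ : IsRootSystem Φ) (B : Base Φ) (hα : α ∈ B.Δ) (hδ : δ ∈ PosR hΦ B)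
    (hne : δ ≠ α) : sRefl α δ ∈ PosR hΦ B ∧ sRefl α δ ≠ α := by
  have hαΦ := B.subset hα
  have hδΦ := posR_subset hΦ B hδ
  have hδpos := ((mem_posR hΦ B).1 hδ).2
  obtain ⟨n, hn⟩ := hΦ.cartan_int δ hδΦ α hαΦ
  have hεΦ : sRefl α δ ∈ Φ := hΦ.reflect_mem α hαΦ δ hδΦ
  have hcoe := coeff_sRefl hΦ B hα hδΦ hn
  have hδnegα : δ ≠ -α := by
    intro h
    have h1 := hδpos α hα
    rw [h, coeff_neg hΦ B hαΦ α hα, coeff_base B hα hα] at h1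
    simp at h1
  obtain ⟨γ₀, hγ₀Δ, hγ₀ne, hγ₀pos⟩ : ∃ γ₀ ∈ B.Δ, γ₀ ≠ α ∧ 0 < B.coeff δ γ₀ := by
    by_contra hcon
    push_neg at hcon
    have hz : ∀ γ ∈ B.Δ, γ ≠ α → B.coeff δ γ = 0 := fun γ hγ hne' =>
      le_antisymm (hcon γ hγ hne') (hδpos γ hγ)
    rcases collapse hΦ B hδΦ hα hz with h | h
    · exact hne h
    · exact hδnegα h
  have hcγ₀ : B.coeff (sRefl α δ) γ₀ = B.coeff δ γ₀ := by
    rw [hcoe γ₀ hγ₀Δ, if_neg hγ₀ne, sub_zero]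
  constructor
  · rw [mem_posR]
    refine ⟨hεΦ, ?_⟩
    rcases B.sign _ hεΦ with h | h
    · exact h
    · exfalso
      have := h γ₀ hγ₀Δ
      omega
  · intro habs
    rw [habs, coeff_base B hα hγ₀Δ, if_neg hγ₀ne] at hcγ₀
    omega

lemma mem_base_of_indec (hΦ : IsRootSystem Φ) (B : Base Φ) (hδ : δ ∈ PosR hΦ B)
    (hind : ∀ s ∈ PosR hΦ B, ∀ t ∈ PosR hΦ B, s + t ≠ δ) : δ ∈ B.Δ := by
  by_contra hδΔ
  have hδΦ := posR_subset hΦ B hδ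
  have hδpos := ((mem_posR hΦ B).1 hδ).2
  obtain ⟨γ, hγΔ, hγpos⟩ : ∃ γ ∈ B.Δ, 0 < ⟪δ, γ⟫_ℝ := by
    by_contra hcon
    push_neg at hcon
    have h2 : ⟪δ, δ⟫_ℝ ≤ 0 := by
      rw [inner_coeff hΦ B δ hδΦ]
      apply Finset.sum_nonpos
      intro γ hγ
      exact mul_nonpos_iff.2 (Or.inl ⟨by exact_mod_cast hδpos γ hγ, hcon γ hγ⟩)
    rw [hΦ.norm_two δ hδΦ] at h2
    linarith
  have hγΦ := B.subset hγΔ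
  have hδγ : δ ≠ γ := fun h => hδΔ (h ▸ hγΔ)
  have h1 : ⟪δ, γ⟫_ℝ = ((1 : ℤ) : ℝ) := by
    rw [inner_eq_one hΦ hδΦ hγΦ hγpos hδγ]; norm_num
  have htΦ : sRefl γ δ ∈ Φ := hΦ.reflect_mem γ hγΦ δ hδΦ
  have hcoe := coeff_sRefl hΦ B hγΔ hδΦ h1
  have hδnegγ : δ ≠ -γ := by
    intro h
    have hp := hδpos γ hγΔ
    rw [h, coeff_neg hΦ B hγΦ γ hγΔ, coeff_base B hγΔ hγΔ] at hp
    simp at hp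
  have htPos : sRefl γ δ ∈ PosR hΦ B := by
    rw [mem_posR]
    refine ⟨htΦ, ?_⟩
    rcases B.sign _ htΦ with h | h
    · exact h
    · exfalso
      have hz : ∀ γ' ∈ B.Δ, γ' ≠ γ → B.coeff δ γ' = 0 := by
        intro γ' hγ' hne'
        have h1' := h γ' hγ'
        rw [hcoe γ' hγ', if_neg hne'] at h1'
        have := hδpos γ' hγ'
        omega
      rcases collapse hΦ B hδΦ hγΔ hz with hh | hh
      · exact hδγ hh
      · exact hδnegγ hh
  apply hind γ (base_mem_posR hΦ B hγΔ) (sRefl γ δ) htPos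
  rw [sRefl_def, h1]
  module

lemma finiteDim (hΦ : IsRootSystem Φ) : FiniteDimensional ℝ E :=
  ⟨⟨hΦ.finite.toFinset, by rw [Set.Finite.coe_toFinset]; exact hΦ.span_top⟩⟩

lemma span_pair_cases (hΦ : IsRootSystem Φ) (hr : r ∈ Φ) (hr' : r' ∈ Φ)
    (horth : ⟪r, r'⟫_ℝ = 0) (hs : s ∈ Φ) (hmem : s ∈ Submodule.span ℝ ({r, r'} : Set E)) :
    s = r ∨ s = -r ∨ s = r' ∨ s = -r' := by
  obtain ⟨a, b, hab⟩ := Submodule.mem_span_pair.1 hmem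
  obtain ⟨n, hn⟩ := hΦ.cartan_int s hs r hr
  obtain ⟨m, hm⟩ := hΦ.cartan_int s hs r' hr'
  have hrr := hΦ.norm_two r hr
  have hrr' := hΦ.norm_two r' hr'
  have horth' : ⟪r', r⟫_ℝ = 0 := by rw [real_inner_comm]; exact horth
  have h2a : 2 * a = (n : ℝ) := by
    rw [← hn, ← hab]
    simp only [inner_add_left, real_inner_smul_left, hrr, horth']
    ring
  have h2b : 2 * b = (m : ℝ) := by
    rw [← hm, ← hab]
    simp only [inner_add_left, real_inner_smul_left, hrr', horth]
    ring
  have hval : ⟪s, s⟫_ℝ = a * a * 2 + b * b * 2 := by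
    rw [← hab]
    simp only [inner_add_left, inner_add_right, real_inner_smul_left, real_inner_smul_right,
      hrr, hrr', horth, horth']
    ring
  rw [hΦ.norm_two s hs] at hval
  have h4 : (n : ℝ) ^ 2 + (m : ℝ) ^ 2 = 4 := by rw [← h2a, ← h2b]; nlinarith [hval]
  have h4' : n ^ 2 + m ^ 2 = 4 := by exact_mod_cast h4
  have hnb : -2 ≤ n ∧ n ≤ 2 := by constructor <;> nlinarith
  have hmb : -2 ≤ m ∧ m ≤ 2 := by constructor <;> nlinarith
  obtain ⟨hn1, hn2⟩ := hnb
  obtain ⟨hm1, hm2⟩ := hmb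
  have hcase : (n = 2 ∧ m = 0) ∨ (n = -2 ∧ m = 0) ∨ (n = 0 ∧ m = 2) ∨ (n = 0 ∧ m = -2) := by
    interval_cases n <;> interval_cases m <;> omega
  rcases hcase with ⟨e1, e2⟩ | ⟨e1, e2⟩ | ⟨e1, e2⟩ | ⟨e1, e2⟩ <;>
    rw [e1] at h2a <;> rw [e2] at h2b <;>
    [left; (right; left); (right; right; left); (right; right; right)] <;>
    rw [← hab] <;>
    rw [show a = (2 * a) / 2 by ring, show b = (2 * b) / 2 by ring, h2a, h2b] <;>
    push_cast <;> module

lemma exists_generic (hΦ : IsRootSystem Φ) (hr : r ∈ Φ) (hr' : r' ∈ Φ)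
    (horth : ⟪r, r'⟫_ℝ = 0) :
    ∃ u : E, ⟪r, u⟫_ℝ = 0 ∧ ⟪r', u⟫_ℝ = 0 ∧
      ∀ s ∈ Φ, s ≠ r → s ≠ -r → s ≠ r' → s ≠ -r' → ⟪s, u⟫_ℝ ≠ 0 := by
  haveI := finiteDim hΦ
  set K := Submodule.span ℝ ({r, r'} : Set E) with hK
  have main : ∀ S : Finset E, ∃ u ∈ Kᗮ, ∀ s ∈ S, s ∉ K → ⟪s, u⟫_ℝ ≠ 0 := by
    intro S
    induction S using Finset.induction_on with
    | empty => exact ⟨0, zero_mem _, by simp⟩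
    | @insert s₀ S hs₀S IH =>
      obtain ⟨u, huK, hu⟩ := IH
      by_cases hs₀ : s₀ ∈ K
      · refine ⟨u, huK, fun s hs hsK => ?_⟩
        rcases Finset.mem_insert.1 hs with h | h
        · exact absurd (h ▸ hs₀) hsK
        · exact hu s h hsK
      · set u₀ := s₀ - (K.orthogonalProjectionOnto s₀ : E) with hu₀
        have hu₀K : u₀ ∈ Kᗮ := Submodule.sub_starProjection_mem_orthogonal s₀
        have hs₀u₀ : ⟪s₀, u₀⟫_ℝ ≠ 0 := by
          have h1 : ⟪(K.orthogonalProjectionOnto s₀ : E), u₀⟫_ℝ = 0 :=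
            (Submodule.mem_orthogonal K u₀).1 hu₀K _ (SetLike.coe_mem _)
          have h2 : ⟪s₀, u₀⟫_ℝ = ⟪u₀, u₀⟫_ℝ := by
            conv_lhs => rw [show s₀ = (K.orthogonalProjectionOnto s₀ : E) + u₀ by rw [hu₀]; abel]
            rw [inner_add_left, h1, zero_add]
          rw [h2]
          intro h
          have h0 : u₀ = 0 := inner_self_eq_zero.1 h
          apply hs₀
          have : s₀ = (K.orthogonalProjectionOnto s₀ : E) := by
            have := hu₀
            rw [h0] at this
            have := this.symm
            rwa [sub_eq_zero] at this
          rw [this]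
          exact SetLike.coe_mem _
        set T : Finset ℝ := (insert s₀ S).image (fun s => -⟪s, u⟫_ℝ / ⟪s, u₀⟫_ℝ) with hT
        obtain ⟨c, hcT⟩ := Infinite.exists_notMem_finset T
        refine ⟨u + c • u₀, add_mem huK (Submodule.smul_mem _ _ hu₀K), ?_⟩
        intro s hs hsK
        have hlin : ⟪s, u + c • u₀⟫_ℝ = ⟪s, u⟫_ℝ + c * ⟪s, u₀⟫_ℝ := by
          rw [inner_add_right, real_inner_smul_right]
        by_cases h0 : ⟪s, u₀⟫_ℝ = 0
        · rcases Finset.mem_insert.1 hs with h | h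
          · exact absurd (h ▸ h0) hs₀u₀
          · rw [hlin, h0, mul_zero, add_zero]
            exact hu s h hsK
        · rw [hlin]
          intro habs
          apply hcT
          rw [hT, Finset.mem_image]
          refine ⟨s, hs, ?_⟩
          rw [div_eq_iff h0]
          linarith
  obtain ⟨u, huK, hu⟩ := main hΦ.finite.toFinset
  have horthK : ∀ x ∈ K, ⟪x, u⟫_ℝ = 0 := (Submodule.mem_orthogonal K u).1 huK
  refine ⟨u, horthK r (Submodule.subset_span (by simp)),
    horthK r' (Submodule.subset_span (by simp)), ?_⟩
  intro s hs h1 h2 h3 h4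
  apply hu s (hΦ.finite.mem_toFinset.2 hs)
  intro hsK
  rcases span_pair_cases hΦ hr hr' horth hs hsK with h | h | h | h <;> tauto

lemma conj_posR (hΦ : IsRootSystem Φ) (B : Base Φ) : ∀ (n : ℕ) (v : E),
    (∀ δ ∈ Φ, ⟪v, δ⟫_ℝ ≠ 0) →
    ((PosR hΦ B).filter fun δ => ⟪v, δ⟫_ℝ < 0).card = n →
    ∃ w ∈ WeylGroup Φ, ∀ δ ∈ Φ, (0 < ⟪v, δ⟫_ℝ ↔ w δ ∈ PosR hΦ B) := by
  intro n
  induction n with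
  | zero =>
    intro v hnv hcard
    have hempty : ∀ δ ∈ PosR hΦ B, ¬(⟪v, δ⟫_ℝ < 0) := by
      intro δ hδ hlt
      have hmem : δ ∈ (PosR hΦ B).filter fun δ => ⟪v, δ⟫_ℝ < 0 :=
        Finset.mem_filter.2 ⟨hδ, hlt⟩
      rw [Finset.card_eq_zero] at hcard
      rw [hcard] at hmem
      exact absurd hmem (Finset.notMem_empty δ)
    refine ⟨1, one_mem _, fun δ hδ => ?_⟩
    constructor
    · intro hpos
      show δ ∈ PosR hΦ B
      rcases posR_or_neg hΦ B hδ with h | h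
      · exact h
      · exfalso
        apply hempty _ h
        rw [inner_neg_right]
        linarith
    · intro hmem
      have hmem' : δ ∈ PosR hΦ B := hmem
      have hn := hempty δ hmem'
      rcases (hnv δ hδ).lt_or_gt with h | h
      · exact absurd h hn
      · exact h
  | succ n IH =>
    intro v hnv hcard
    obtain ⟨α, hαΔ, hαneg⟩ : ∃ α ∈ B.Δ, ⟪v, α⟫_ℝ < 0 := by
      by_contra hcon
      push_neg at hcon
      have hnone : ∀ δ ∈ PosR hΦ B, ¬(⟪v, δ⟫_ℝ < 0) := by
        intro δ hδ hlt
        have hpos := ((mem_posR hΦ B).1 hδ).2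
        have h0 : 0 ≤ ⟪v, δ⟫_ℝ := by
          rw [inner_coeff hΦ B v (posR_subset hΦ B hδ)]
          apply Finset.sum_nonneg
          intro γ hγ
          exact mul_nonneg (by exact_mod_cast hpos γ hγ) (hcon γ hγ)
        linarith
      have hemp : ((PosR hΦ B).filter fun δ => ⟪v, δ⟫_ℝ < 0) = ∅ :=
        Finset.filter_eq_empty_iff.2 fun {δ} hδ => hnone δ hδ
      rw [hemp] at hcard
      simp at hcard
    have hαΦ := B.subset hαΔ
    have hαα := hΦ.norm_two α hαΦ
    have hsαα : sRefl α α = -α := by rw [sRefl_def, hαα]; module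
    set v' := sRefl α v with hv'
    have hnv' : ∀ δ ∈ Φ, ⟪v', δ⟫_ℝ ≠ 0 := by
      intro δ hδ
      rw [hv', sRefl_selfadj]
      exact hnv _ (hΦ.reflect_mem α hαΦ δ hδ)
    have hcard' : ((PosR hΦ B).filter fun δ => ⟪v', δ⟫_ℝ < 0).card = n := by
      have himg : ((PosR hΦ B).filter fun δ => ⟪v', δ⟫_ℝ < 0)
          = (((PosR hΦ B).filter fun δ => ⟪v, δ⟫_ℝ < 0).erase α).image (sRefl α) := by
        refine Finset.ext fun δ => ?_
        simp only [Finset.mem_filter, Finset.mem_image, Finset.mem_erase]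
        constructor
        · rintro ⟨hδP, hδlt⟩
          have hδα : δ ≠ α := by
            rintro rfl
            rw [hv', sRefl_selfadj, hsαα, inner_neg_right] at hδlt
            linarith
          obtain ⟨hεP, hεα⟩ := sRefl_base_posR hΦ B hαΔ hδP hδα
          rw [hv', sRefl_selfadj] at hδlt
          exact Finset.mem_image.2 ⟨sRefl α δ, Finset.mem_erase.2 ⟨hεα, Finset.mem_filter.2 ⟨hεP, hδlt⟩⟩, sRefl_invol hαα δ⟩
        · intro hmem
          obtain ⟨ε, hε, rfl⟩ := Finset.mem_image.1 hmem
          obtain ⟨hεα, hεm⟩ := Finset.mem_erase.1 hε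
          obtain ⟨hεP, hεlt⟩ := Finset.mem_filter.1 hεm
          obtain ⟨hP, _⟩ := sRefl_base_posR hΦ B hαΔ hεP hεα
          refine ⟨hP, ?_⟩
          rw [hv', sRefl_selfadj, sRefl_invol hαα]
          exact hεlt
      rw [himg, Finset.card_image_of_injective _
        (Function.LeftInverse.injective (sRefl_invol hαα)),
        Finset.card_erase_of_mem (Finset.mem_filter.2 ⟨base_mem_posR hΦ B hαΔ, hαneg⟩), hcard]
      omega
    obtain ⟨w', hw'W, hw'⟩ := IH v' hnv' hcard'
    refine ⟨w' * sRefl α, mul_mem hw'W (Submonoid.subset_closure ⟨α, hαΦ, rfl⟩), ?_⟩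
    intro δ hδ
    have hδ' : sRefl α δ ∈ Φ := hΦ.reflect_mem α hαΦ δ hδ
    have heq : ⟪v', sRefl α δ⟫_ℝ = ⟪v, δ⟫_ℝ := by
      rw [hv', sRefl_selfadj, sRefl_invol hαα]
    rw [show (w' * sRefl α) δ = w' (sRefl α δ) from rfl, ← hw' _ hδ', heq]

lemma indec_aux (hΦ : IsRootSystem Φ) {r r' u : E} {M : ℝ} (hr : r ∈ Φ) (hr' : r' ∈ Φ)
    (horth : ⟪r, r'⟫_ℝ = 0) (hur : ⟪r, u⟫_ℝ = 0) (hur' : ⟪r', u⟫_ℝ = 0)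
    (hgen : ∀ s ∈ Φ, s ≠ r → s ≠ -r → s ≠ r' → s ≠ -r' → ⟪s, u⟫_ℝ ≠ 0)
    (hMbig : ∀ s ∈ Φ, ⟪s, u⟫_ℝ ≠ 0 → 4 < M * |⟪s, u⟫_ℝ|) :
    ∀ s ∈ Φ, ∀ t ∈ Φ, 0 < ⟪r + r' + M • u, s⟫_ℝ → 0 < ⟪r + r' + M • u, t⟫_ℝ → s + t ≠ r := by
  intro s hs t ht hfs hft hst
  have hexp : ∀ δ : E, ⟪r + r' + M • u, δ⟫_ℝ = ⟪r, δ⟫_ℝ + ⟪r', δ⟫_ℝ + M * ⟪u, δ⟫_ℝ := by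
    intro δ
    rw [inner_add_left, inner_add_left, real_inner_smul_left]
  by_cases h1 : s = r
  · have ht0 : t = 0 := by
      have : r + t = r + 0 := by rw [add_zero]; rw [h1] at hst; exact hst
      exact add_left_cancel this
    exact hΦ.nonzero (ht0 ▸ ht)
  by_cases h2 : s = -r
  · have ht2 : (2:ℝ) • r = t := by
      rw [h2] at hst
      have : t = r + r := by
        have := hst
        rw [neg_add_eq_iff_eq_add] at this
        exact this
      rw [this, two_smul]
    rcases hΦ.reduced r hr 2 (ht2 ▸ ht) with h | h <;> norm_num at h
  by_cases h3 : s = r'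
  · have ht3 : t = r - r' := by rw [h3] at hst; exact eq_sub_of_add_eq' hst
    have h4 : ⟪t, t⟫_ℝ = 4 := by
      rw [ht3, real_inner_sub_sub_self, hΦ.norm_two r hr, hΦ.norm_two r' hr', horth]
      ring
    rw [hΦ.norm_two t ht] at h4
    norm_num at h4
  by_cases h4 : s = -r'
  · have ht4 : t = r + r' := by
      rw [h4] at hst
      rw [neg_add_eq_iff_eq_add] at hst
      rw [hst]; abel
    have h5 : ⟪t, t⟫_ℝ = 4 := by
      rw [ht4, real_inner_add_add_self, hΦ.norm_two r hr, hΦ.norm_two r' hr', horth]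
      ring
    rw [hΦ.norm_two t ht] at h5
    norm_num at h5
  have hsu : ⟪s, u⟫_ℝ ≠ 0 := hgen s hs h1 h2 h3 h4
  have hsum : ⟪u, s⟫_ℝ + ⟪u, t⟫_ℝ = 0 := by
    rw [← inner_add_right, hst, real_inner_comm]
    exact hur
  have hbr : ∀ x ∈ Φ, ⟪r, x⟫_ℝ ≤ 2 := fun x hx => inner_le_two hΦ hr hx
  have hbr' : ∀ x ∈ Φ, ⟪r', x⟫_ℝ ≤ 2 := fun x hx => inner_le_two hΦ hr' hx
  rcases hsu.lt_or_gt with hlt | hgt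
  · -- ⟪s,u⟫ < 0 : f s < 0
    have hb := hMbig s hs hsu
    rw [abs_of_neg hlt] at hb
    rw [hexp s] at hfs
    have : ⟪u, s⟫_ℝ = ⟪s, u⟫_ℝ := real_inner_comm _ _
    nlinarith [hbr s hs, hbr' s hs]
  · -- ⟪s,u⟫ > 0, so ⟪u,t⟫ < 0 : f t < 0
    have htu : ⟪t, u⟫_ℝ ≠ 0 := by
      intro h0
      rw [real_inner_comm] at h0
      rw [h0, add_zero] at hsum
      rw [real_inner_comm] at hsum
      exact hsu hsum
    have hb := hMbig t ht htu
    have htneg : ⟪t, u⟫_ℝ < 0 := by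
      have h1' : ⟪u, s⟫_ℝ > 0 := by rwa [real_inner_comm]
      have : ⟪u, t⟫_ℝ < 0 := by linarith
      rwa [real_inner_comm]
    rw [abs_of_neg htneg] at hb
    rw [hexp t] at hft
    have : ⟪u, t⟫_ℝ = ⟪t, u⟫_ℝ := real_inner_comm _ _
    nlinarith [hbr t ht, hbr' t ht]

end Aux


/-- Any pair of orthogonal roots in a simply-laced root system is Weyl-conjugate to a pair of
orthogonal simple roots. -/
theorem orthogonal_pair_conj_to_simple_pair
    (hΦ : IsRootSystem Φ) (B : Base Φ)
    {r r' : E} (hr : r ∈ Φ) (hr' : r' ∈ Φ) (horth : ⟪r, r'⟫_ℝ = 0) :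
    ∃ w ∈ WeylGroup Φ, ∃ α ∈ B.Δ, ∃ α' ∈ B.Δ,
      ⟪α, α'⟫_ℝ = 0 ∧ w r = α ∧ w r' = α' := by
  obtain ⟨u, hur, hur', hgen⟩ := exists_generic hΦ hr hr' horth
  set M : ℝ := 1 + ∑ x ∈ hΦ.finite.toFinset, 4 / |⟪x, u⟫_ℝ| with hM
  have hsum0 : 0 ≤ ∑ x ∈ hΦ.finite.toFinset, 4 / |⟪x, u⟫_ℝ| :=
    Finset.sum_nonneg fun i _ => by positivity
  have hM0 : 0 ≤ M := by rw [hM]; linarith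
  have hMbig : ∀ s ∈ Φ, ⟪s, u⟫_ℝ ≠ 0 → 4 < M * |⟪s, u⟫_ℝ| := by
    intro s hs h0
    have habs : 0 < |⟪s, u⟫_ℝ| := abs_pos.2 h0
    have hle : 4 / |⟪s, u⟫_ℝ| ≤ ∑ x ∈ hΦ.finite.toFinset, 4 / |⟪x, u⟫_ℝ| :=
      Finset.single_le_sum (f := fun x => 4 / |⟪x, u⟫_ℝ|) (fun i _ => by positivity) (hΦ.finite.mem_toFinset.2 hs)
    have hM1 : 1 + 4 / |⟪s, u⟫_ℝ| ≤ M := by rw [hM]; linarith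
    have key : (1 + 4 / |⟪s, u⟫_ℝ|) * |⟪s, u⟫_ℝ| = |⟪s, u⟫_ℝ| + 4 := by
      field_simp
    have hmul := mul_le_mul_of_nonneg_right hM1 habs.le
    rw [key] at hmul
    linarith
  set v : E := r + r' + M • u with hv
  have hexp : ∀ δ : E, ⟪v, δ⟫_ℝ = ⟪r, δ⟫_ℝ + ⟪r', δ⟫_ℝ + M * ⟪u, δ⟫_ℝ := by
    intro δ
    rw [hv, inner_add_left, inner_add_left, real_inner_smul_left]
  have hvr : ⟪v, r⟫_ℝ = 2 := by
    rw [hexp r, hΦ.norm_two r hr, real_inner_comm r r', horth, real_inner_comm r u, hur]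
    ring
  have hvr' : ⟪v, r'⟫_ℝ = 2 := by
    rw [hexp r', hΦ.norm_two r' hr', horth, real_inner_comm r' u, hur']
    ring
  have hnv : ∀ δ ∈ Φ, ⟪v, δ⟫_ℝ ≠ 0 := by
    intro δ hδ
    by_cases e1 : δ = r
    · rw [e1, hvr]; norm_num
    by_cases e2 : δ = -r
    · rw [e2, inner_neg_right, hvr]; norm_num
    by_cases e3 : δ = r'
    · rw [e3, hvr']; norm_num
    by_cases e4 : δ = -r'
    · rw [e4, inner_neg_right, hvr']; norm_num
    have hδu := hgen δ hδ e1 e2 e3 e4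
    have hb := hMbig δ hδ hδu
    rw [hexp δ]
    intro habs
    have h1 : |⟪r, δ⟫_ℝ| ≤ 2 := abs_le.2 ⟨inner_ge_neg_two hΦ hr hδ, inner_le_two hΦ hr hδ⟩
    have h2 : |⟪r', δ⟫_ℝ| ≤ 2 := abs_le.2 ⟨inner_ge_neg_two hΦ hr' hδ, inner_le_two hΦ hr' hδ⟩
    have h3 : M * ⟪u, δ⟫_ℝ = -(⟪r, δ⟫_ℝ + ⟪r', δ⟫_ℝ) := by linarith
    have h4 : |M * ⟪u, δ⟫_ℝ| ≤ 4 := by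
      rw [h3, abs_neg]
      calc |⟪r, δ⟫_ℝ + ⟪r', δ⟫_ℝ| ≤ |⟪r, δ⟫_ℝ| + |⟪r', δ⟫_ℝ| := abs_add_le _ _
        _ ≤ 4 := by linarith
    rw [abs_mul, abs_of_nonneg hM0, real_inner_comm δ u] at h4
    linarith
  obtain ⟨w, hwW, hw⟩ := conj_posR hΦ B _ v hnv rfl
  obtain ⟨hwadd, hwsmul, hwinn, hwmem, w', hw'W, hw'l, hw'r⟩ := wnice_of_mem hΦ hwW
  obtain ⟨hw'add, -, -, hw'mem, -⟩ := wnice_of_mem hΦ hw'W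
  have hindec_r : ∀ s ∈ PosR hΦ B, ∀ t ∈ PosR hΦ B, s + t ≠ w r := by
    intro s hsP t htP habs
    have hsΦ := posR_subset hΦ B hsP
    have htΦ := posR_subset hΦ B htP
    have hs' : w' s ∈ Φ := hw'mem s hsΦ
    have ht' : w' t ∈ Φ := hw'mem t htΦ
    have hfs : 0 < ⟪v, w' s⟫_ℝ := (hw _ hs').2 (by rw [hw'r s]; exact hsP)
    have hft : 0 < ⟪v, w' t⟫_ℝ := (hw _ ht').2 (by rw [hw'r t]; exact htP)
    have hsum : w' s + w' t = r := by rw [← hw'add, habs, hw'l]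
    exact indec_aux hΦ hr hr' horth hur hur' hgen hMbig (w' s) hs' (w' t) ht' hfs hft hsum
  have hwrP : w r ∈ PosR hΦ B := (hw r hr).1 (by rw [hvr]; norm_num)
  have hwrΔ : w r ∈ B.Δ := mem_base_of_indec hΦ B hwrP hindec_r
  have hgen' : ∀ s ∈ Φ, s ≠ r' → s ≠ -r' → s ≠ r → s ≠ -r → ⟪s, u⟫_ℝ ≠ 0 :=
    fun s hs a b c d => hgen s hs c d a b
  have horth2 : ⟪r', r⟫_ℝ = 0 := by rw [real_inner_comm]; exact horth
  have hveq : r' + r + M • u = v := by rw [hv]; abel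
  have hindec_r' : ∀ s ∈ PosR hΦ B, ∀ t ∈ PosR hΦ B, s + t ≠ w r' := by
    intro s hsP t htP habs
    have hsΦ := posR_subset hΦ B hsP
    have htΦ := posR_subset hΦ B htP
    have hs' : w' s ∈ Φ := hw'mem s hsΦ
    have ht' : w' t ∈ Φ := hw'mem t htΦ
    have hfs : 0 < ⟪r' + r + M • u, w' s⟫_ℝ := by
      rw [hveq]; exact (hw _ hs').2 (by rw [hw'r s]; exact hsP)
    have hft : 0 < ⟪r' + r + M • u, w' t⟫_ℝ := by
      rw [hveq]; exact (hw _ ht').2 (by rw [hw'r t]; exact htP)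
    have hsum : w' s + w' t = r' := by rw [← hw'add, habs, hw'l]
    exact indec_aux hΦ hr' hr horth2 hur' hur hgen' hMbig (w' s) hs' (w' t) ht' hfs hft hsum
  have hwr'P : w r' ∈ PosR hΦ B := (hw r' hr').1 (by rw [hvr']; norm_num)
  have hwr'Δ : w r' ∈ B.Δ := mem_base_of_indec hΦ B hwr'P hindec_r'
  exact ⟨w, hwW, w r, hwrΔ, w r', hwr'Δ, by rw [hwinn r r']; exact horth, rfl, rfl⟩


end PaperRS
end

section
/- Let Φ be a reduced crystallographic simply-laced root system with base Δ, and let α ∈ Δ. Then every root δ whose α-coefficient satisfies c_α(δ) = 1 lies in the W_{Δ∖{α}}-orbit of α: there exists w in the subgroup of the Weyl group generated by the simple reflections s_γ for γ ∈ Δ∖{α} such that w(α) = δ. (Paper's Lemma: any root δ with δ(S_α) = −2 can be conjugated to −α using the Weyl group of the Levi L_α; equivalently, the first internal Chevalley module 𝔲_α/[𝔲_α,𝔲_α] is minuscule.) -/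
open scoped InnerProductSpace

namespace PaperRS

variable {E : Type*} [NormedAddCommGroup E] [InnerProductSpace ℝ E]

variable {Φ : Set E}

open scoped Classical

/-- Uniqueness of coefficients with respect to a base. -/
lemma sum_coeff_eq (B : Base Φ) {a b : E → ℝ}
    (h : ∑ γ ∈ B.Δ, a γ • γ = ∑ γ ∈ B.Δ, b γ • γ) : ∀ γ ∈ B.Δ, a γ = b γ := by
  have h0 : ∑ γ ∈ B.Δ, (a γ - b γ) • γ = 0 := by
    simp only [sub_smul, Finset.sum_sub_distrib, h, sub_self]
  have hli := B.indep
  rw [Fintype.linearIndependent_iff] at hli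
  intro γ hγ
  have h1 : ∑ i : {x // x ∈ B.Δ}, (a (i : E) - b (i : E)) • (i : E) = 0 := by
    rw [Finset.univ_eq_attach, Finset.sum_attach B.Δ (fun x => (a x - b x) • x)]
    exact h0
  have := hli (fun i => a (i : E) - b (i : E)) h1 ⟨γ, hγ⟩
  simpa [sub_eq_zero] using this

/-- A root with positive `α`-coefficient has all coefficients nonnegative. -/
lemma coeff_nonneg (B : Base Φ) {α δ : E} (hα : α ∈ B.Δ) (hδ : δ ∈ Φ)
    (hc : B.coeff δ α = 1) : ∀ γ ∈ B.Δ, 0 ≤ B.coeff δ γ := by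
  rcases B.sign δ hδ with h | h
  · exact h
  · have := h α hα; omega

/-- Cartan bound: for distinct roots the Cartan integer is at most `1`. -/
lemma cartan_le_one (hΦ : IsRootSystem Φ) {δ ε : E} (hδ : δ ∈ Φ) (hε : ε ∈ Φ)
    (hne : δ ≠ ε) {n : ℤ} (hn : ⟪δ, ε⟫_ℝ = (n : ℝ)) : n ≤ 1 := by
  have hpos : (0 : ℝ) < ⟪δ - ε, δ - ε⟫_ℝ := by
    rcases lt_or_eq_of_le (real_inner_self_nonneg (x := δ - ε)) with h | h
    · exact h
    · exact absurd (inner_self_eq_zero.mp h.symm) (sub_ne_zero.mpr hne)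
  have hsym : ⟪ε, δ⟫_ℝ = (n : ℝ) := by rw [real_inner_comm]; exact hn
  have hx : ⟪δ - ε, δ - ε⟫_ℝ = 4 - 2 * (n : ℝ) := by
    rw [inner_sub_sub_self, hΦ.norm_two δ hδ, hΦ.norm_two ε hε]
    simp only [hsym, hn]
    ring
  rw [hx] at hpos
  have h2 : (n : ℝ) < 2 := by linarith
  have : n < 2 := by exact_mod_cast h2
  omega

/-- Coefficients of the reflection of a root in a simple root. -/
lemma coeff_reflect (B : Base Φ) {δ γ : E} (hδ : δ ∈ Φ) (hγ : γ ∈ B.Δ)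
    {n : ℤ} (hn : ⟪δ, γ⟫_ℝ = (n : ℝ)) (hε : δ - (n : ℝ) • γ ∈ Φ) :
    ∀ β ∈ B.Δ, B.coeff (δ - (n : ℝ) • γ) β = B.coeff δ β - if β = γ then n else 0 := by
  have key : ∑ β ∈ B.Δ, ((B.coeff (δ - (n : ℝ) • γ) β : ℝ)) • β
      = ∑ β ∈ B.Δ, (((B.coeff δ β : ℝ) - if β = γ then (n : ℝ) else 0)) • β := by
    rw [← B.expand _ hε]
    have : ∑ β ∈ B.Δ, (((B.coeff δ β : ℝ) - if β = γ then (n : ℝ) else 0)) • β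
        = (∑ β ∈ B.Δ, (B.coeff δ β : ℝ) • β)
          - ∑ β ∈ B.Δ, (if β = γ then (n : ℝ) else 0) • β := by
      simp [sub_smul, Finset.sum_sub_distrib]
    rw [this, ← B.expand δ hδ]
    congr 1
    have hsum : ∑ β ∈ B.Δ, (if β = γ then (n : ℝ) else 0) • β
        = ∑ β ∈ B.Δ, (if β = γ then (n : ℝ) • β else 0) :=
      Finset.sum_congr rfl fun β _ => by split <;> simp
    rw [hsum, Finset.sum_ite_eq' B.Δ γ (fun β => (n : ℝ) • β), if_pos hγ]
  intro β hβ
  have := sum_coeff_eq B key β hβ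
  by_cases hbg : β = γ <;> simp [hbg] at this ⊢ <;> exact_mod_cast this

lemma height_ge_one (B : Base Φ) {α δ : E} (hα : α ∈ B.Δ) (hδ : δ ∈ Φ)
    (hc : B.coeff δ α = 1) : 1 ≤ ∑ γ ∈ B.Δ, B.coeff δ γ := by
  have h : B.coeff δ α ≤ ∑ γ ∈ B.Δ, B.coeff δ γ :=
    Finset.single_le_sum (fun γ hγ => coeff_nonneg B hα hδ hc γ hγ) hα
  omega

/-- If `δ ≠ α` has `α`-coefficient `1`, there is a simple root `γ ≠ α` with `⟪δ, γ⟫ > 0`. -/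
lemma exists_descent (hΦ : IsRootSystem Φ) (B : Base Φ) {α δ : E} (hα : α ∈ B.Δ)
    (hδ : δ ∈ Φ) (hc : B.coeff δ α = 1) (hne : δ ≠ α) :
    ∃ γ ∈ B.Δ, γ ≠ α ∧ 0 < ⟪δ, γ⟫_ℝ := by
  by_contra hcon
  push_neg at hcon
  have hδδ : ⟪δ, δ⟫_ℝ = 2 := hΦ.norm_two δ hδ
  have hexp : ⟪δ, δ⟫_ℝ = ∑ γ ∈ B.Δ, (B.coeff δ γ : ℝ) * ⟪δ, γ⟫_ℝ := by
    have h2 : ⟪δ, δ⟫_ℝ = ⟪δ, ∑ γ ∈ B.Δ, (B.coeff δ γ : ℝ) • γ⟫_ℝ := by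
      rw [← B.expand δ hδ]
    rw [h2, inner_sum]
    exact Finset.sum_congr rfl fun γ _ => real_inner_smul_right δ γ _
  obtain ⟨m, hm⟩ := hΦ.cartan_int δ hδ α (B.subset hα)
  have hm1 : m ≤ 1 := cartan_le_one hΦ hδ (B.subset hα) hne hm
  have hsplit : ∑ γ ∈ B.Δ, (B.coeff δ γ : ℝ) * ⟪δ, γ⟫_ℝ
      = (B.coeff δ α : ℝ) * ⟪δ, α⟫_ℝ
        + ∑ γ ∈ B.Δ.erase α, (B.coeff δ γ : ℝ) * ⟪δ, γ⟫_ℝ :=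
    (Finset.add_sum_erase B.Δ _ hα).symm
  have hrest : ∑ γ ∈ B.Δ.erase α, (B.coeff δ γ : ℝ) * ⟪δ, γ⟫_ℝ ≤ 0 := by
    apply Finset.sum_nonpos
    intro γ hγ
    have hγΔ := Finset.mem_of_mem_erase hγ
    have hγα := Finset.ne_of_mem_erase hγ
    have h1 : (0 : ℝ) ≤ (B.coeff δ γ : ℝ) := by
      exact_mod_cast coeff_nonneg B hα hδ hc γ hγΔ
    have h2 : ⟪δ, γ⟫_ℝ ≤ 0 := hcon γ hγΔ hγα
    exact mul_nonpos_of_nonneg_of_nonpos h1 h2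
  have : (2 : ℝ) ≤ 1 := by
    rw [← hδδ, hexp, hsplit]
    have : (B.coeff δ α : ℝ) * ⟪δ, α⟫_ℝ ≤ 1 := by
      rw [hc, hm]; push_cast; linarith [(show (m : ℝ) ≤ 1 by exact_mod_cast hm1)]
    linarith
  linarith

lemma levi_aux (hΦ : IsRootSystem Φ) (B : Base Φ) {α : E} (hα : α ∈ B.Δ) :
    ∀ N : ℕ, ∀ δ, δ ∈ Φ → B.coeff δ α = 1 → (∑ γ ∈ B.Δ, B.coeff δ γ).toNat ≤ N →
      ∃ w ∈ genBy ((↑B.Δ : Set E) \ {α}), w α = δ := by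
  intro N
  induction N with
  | zero =>
    intro δ hδ hc hh
    have := height_ge_one B hα hδ hc
    omega
  | succ N ih =>
    intro δ hδ hc hh
    by_cases hne : δ = α
    · exact ⟨1, Submonoid.one_mem _, hne.symm ▸ rfl⟩
    · obtain ⟨γ, hγΔ, hγα, hpos⟩ := exists_descent hΦ B hα hδ hc hne
      obtain ⟨n, hn⟩ := hΦ.cartan_int δ hδ γ (B.subset hγΔ)
      have hn1 : 1 ≤ n := by
        have h0 : (0 : ℝ) < (n : ℝ) := hn ▸ hpos
        have : 0 < n := by exact_mod_cast h0
        omega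
      set ε := δ - (n : ℝ) • γ with hεdef
      have hεΦ : ε ∈ Φ := by
        have := hΦ.reflect_mem γ (B.subset hγΔ) δ hδ
        rwa [hn] at this
      have hcoeffε := coeff_reflect B hδ hγΔ hn hεΦ
      rw [← hεdef] at hcoeffε
      have hcεα : B.coeff ε α = 1 := by
        have := hcoeffε α hα
        simp [hγα.symm] at this  -- α ≠ γ
        omega
      have hheight : ∑ β ∈ B.Δ, B.coeff ε β = (∑ β ∈ B.Δ, B.coeff δ β) - n := by
        rw [Finset.sum_congr rfl hcoeffε, Finset.sum_sub_distrib,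
          Finset.sum_ite_eq' B.Δ γ (fun _ => n)]
        simp [hγΔ]
      have hhε : (∑ β ∈ B.Δ, B.coeff ε β).toNat ≤ N := by
        have h1 := height_ge_one B hα hεΦ hcεα
        have h2 := height_ge_one B hα hδ hc
        omega
      obtain ⟨w, hw, hwα⟩ := ih ε hεΦ hcεα hhε
      refine ⟨sRefl γ * w, ?_, ?_⟩
      · exact Submonoid.mul_mem _
          (Submonoid.subset_closure (Set.mem_image_of_mem _ ⟨hγΔ, by simp [hγα]⟩)) hw
      · show sRefl γ (w α) = δ
        rw [hwα]
        have hεγ : ⟪ε, γ⟫_ℝ = -(n : ℝ) := by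
          rw [hεdef, inner_sub_left, real_inner_smul_left, hΦ.norm_two γ (B.subset hγΔ), hn]
          ring
        show ε - ⟪ε, γ⟫_ℝ • γ = δ
        rw [hεγ, hεdef]
        module

/-- Every root `δ` with `α`-coefficient `1` lies in the orbit of `α` under the subgroup of the
Weyl group generated by the simple reflections in the simple roots other than `α`. -/
theorem levi_weyl_conjugates_alpha_to_delta
    (hΦ : IsRootSystem Φ) (B : Base Φ)
    {α : E} (hα : α ∈ B.Δ) {δ : E} (hδ : δ ∈ Φ) (hc : B.coeff δ α = 1) :
    ∃ w ∈ genBy ((↑B.Δ : Set E) \ {α}), w α = δ :=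
  levi_aux hΦ B hα (∑ γ ∈ B.Δ, B.coeff δ γ).toNat δ hδ hc le_rfl

end PaperRS
end

section
/- Let n ≥ 3 and consider the type A_n root system with simple roots α_m = e_m − e_{m+1} (1 ≤ m ≤ n). Fix k with 2 ≤ k ≤ n−1 and let α = α_k. Then the set Φ_α of roots ε that are orthogonal to α and have α-coefficient 1 in the simple-root expansion equals {e_i − e_j : 1 ≤ i < k and k+1 < j ≤ n+1}, and the subgroup of S_{n+1} consisting of permutations that fix both k and k+1 and preserve the set {1,…,k} (the stabilizer of α in the Weyl group of the Levi generated by the simple roots other than α) acts transitively on Φ_α. (Paper's Lemma for type A_n and a non-extremal simple root.) -/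
namespace PaperA

/-- The root system of type `A_n`, realized inside `ℝ^{n+1}` (with its standard basis and
dot product) as the set of vectors `e_i - e_j` for `i ≠ j`. -/
def aRoots (n : ℕ) : Set (Fin (n + 1) → ℝ) :=
  {v | ∃ i j : Fin (n + 1), i ≠ j ∧ v = Pi.single i (1 : ℝ) - Pi.single j (1 : ℝ)}

/-- The `m`-th simple root of type `A_n` (0-indexed: `sroot n m = e_{m+1} - e_{m+2}` in
1-based notation, i.e. the simple root `α_{m+1}`). -/
def sroot (n : ℕ) (m : Fin n) : Fin (n + 1) → ℝ :=
  Pi.single m.castSucc (1 : ℝ) - Pi.single m.succ (1 : ℝ)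

lemma sum_single_filter {n : ℕ} (a : Fin (n+1)) (s : ℕ) :
    ∑ t ∈ Finset.univ.filter (fun t : Fin (n+1) => t.val ≤ s), Pi.single a (1:ℝ) t
      = if a.val ≤ s then 1 else 0 := by
  simp only [Pi.single_apply]
  rw [Finset.sum_ite_eq' _ a (fun _ => (1:ℝ))]
  simp

lemma sum_sroot_filter {n : ℕ} (m : Fin n) (s : ℕ) :
    ∑ t ∈ Finset.univ.filter (fun t : Fin (n+1) => t.val ≤ s), sroot n m t
      = (if m.val ≤ s then (1:ℝ) else 0) - (if m.val + 1 ≤ s then 1 else 0) := by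
  simp only [sroot, Pi.sub_apply, Finset.sum_sub_distrib, sum_single_filter]
  simp [Fin.val_succ]

lemma coeff_eq {n : ℕ} (v : Fin (n+1) → ℝ) (c : Fin n → ℤ)
    (hv : v = ∑ m, (c m : ℝ) • sroot n m) (s : Fin n) :
    (c s : ℝ) = ∑ t ∈ Finset.univ.filter (fun t : Fin (n+1) => t.val ≤ s.val), v t := by
  subst hv
  simp only [Finset.sum_apply, Pi.smul_apply, smul_eq_mul]
  rw [Finset.sum_comm, ]
  have : ∀ m : Fin n, ∑ t ∈ Finset.univ.filter (fun t : Fin (n+1) => t.val ≤ s.val),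
      (c m : ℝ) * sroot n m t = if m = s then (c m : ℝ) else 0 := by
    intro m
    rw [← Finset.mul_sum, sum_sroot_filter]
    rcases eq_or_ne m s with rfl | hms
    · simp
    · have : m.val ≠ s.val := fun h => hms (Fin.ext h)
      rcases lt_or_gt_of_ne this with h | h
      · rw [if_pos (Nat.le_of_lt h), if_pos (by omega), if_neg hms]
        ring
      · rw [if_neg (by omega), if_neg (by omega), if_neg hms]
        ring
  rw [Finset.sum_congr rfl (fun m _ => this m), Finset.sum_ite_eq' Finset.univ s]
  simp

lemma expand {n : ℕ} (i j : Fin (n+1)) (hij : i.val < j.val) :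
    Pi.single i (1:ℝ) - Pi.single j 1
      = ∑ m : Fin n, (((if i.val ≤ m.val ∧ m.val < j.val then (1:ℤ) else 0) : ℤ) : ℝ) • sroot n m := by
  funext t
  simp only [Finset.sum_apply, Pi.smul_apply, smul_eq_mul, sroot, Pi.sub_apply, mul_sub]
  rw [Finset.sum_sub_distrib]
  have hS1 : ∑ m : Fin n, (((if i.val ≤ m.val ∧ m.val < j.val then (1:ℤ) else 0) : ℤ) : ℝ) *
      (Pi.single m.castSucc (1:ℝ) : Fin (n+1) → ℝ) t
      = if i.val ≤ t.val ∧ t.val < j.val ∧ t.val < n then 1 else 0 := by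
    rcases Nat.lt_or_ge t.val n with h | h
    · rw [Finset.sum_eq_single ⟨t.val, h⟩]
      · have : (⟨t.val, h⟩ : Fin n).castSucc = t := by ext; simp
        rw [this, Pi.single_eq_same]
        split_ifs <;> simp_all <;> omega
      · intro m _ hm
        have : m.castSucc ≠ t := by
          intro h'; apply hm; ext; simpa using congrArg Fin.val h'
        simp [Pi.single_eq_of_ne' this]
      · simp
    · rw [if_neg (by omega)]
      apply Finset.sum_eq_zero
      intro m _
      have : m.castSucc ≠ t := by
        intro h'; have := congrArg Fin.val h'; simp at this; omega
      simp [Pi.single_eq_of_ne' this]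
  have hS2 : ∑ m : Fin n, (((if i.val ≤ m.val ∧ m.val < j.val then (1:ℤ) else 0) : ℤ) : ℝ) *
      (Pi.single m.succ (1:ℝ) : Fin (n+1) → ℝ) t
      = if i.val + 1 ≤ t.val ∧ t.val < j.val + 1 then 1 else 0 := by
    rcases Nat.lt_or_ge 0 t.val with h | h
    · have hlt : t.val - 1 < n := by omega
      rw [Finset.sum_eq_single ⟨t.val - 1, hlt⟩]
      · have : (⟨t.val - 1, hlt⟩ : Fin n).succ = t := by ext; simp; omega
        rw [this, Pi.single_eq_same]
        split_ifs <;> simp_all <;> omega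
      · intro m _ hm
        have : m.succ ≠ t := by
          intro h'; apply hm; have := congrArg Fin.val h'; simp [Fin.val_succ] at this
          ext; simp; omega
        simp [Pi.single_eq_of_ne' this]
      · simp
    · rw [if_neg (by omega)]
      apply Finset.sum_eq_zero
      intro m _
      have : m.succ ≠ t := by
        intro h'; have := congrArg Fin.val h'; simp [Fin.val_succ] at this; omega
      simp [Pi.single_eq_of_ne' this]
  rw [hS1, hS2]
  have hjn : j.val < n + 1 := j.isLt
  simp only [Pi.single_apply, Fin.ext_iff]
  split_ifs <;> norm_num <;> omega

lemma dot_sroot {n : ℕ} (v : Fin (n+1) → ℝ) (m : Fin n) :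
    ∑ t, v t * sroot n m t = v m.castSucc - v m.succ := by
  simp only [sroot, Pi.sub_apply, mul_sub, Finset.sum_sub_distrib, Pi.single_apply,
    mul_ite, mul_one, mul_zero]
  rw [Finset.sum_ite_eq' Finset.univ m.castSucc v, Finset.sum_ite_eq' Finset.univ m.succ v]
  simp


/-- For the simple root `α = α_k` of `A_n` (`n ≥ 3`, `2 ≤ k ≤ n-1`, 1-based indexing):
the set `Φ_α` of roots orthogonal to `α` with `α`-coefficient `1` equals
`{e_i - e_j : 1 ≤ i < k, k+1 < j ≤ n+1}` (i.e., 0-based, `i + 2 ≤ k` and `k + 1 ≤ j`), and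
the subgroup of `S_{n+1}` of permutations fixing `k` and `k+1` and preserving `{1, …, k}`
(the stabilizer of `α` in the Weyl group of the Levi) acts transitively on `Φ_α`. -/
theorem stabilizer_transitive_on_PhiSet_A (n k : ℕ) (hn : 3 ≤ n)
    (hk2 : 2 ≤ k) (hkn : k ≤ n - 1)
    (α : Fin (n + 1) → ℝ) (hα : α = sroot n ⟨k - 1, by omega⟩)
    (Φα : Set (Fin (n + 1) → ℝ))
    (hΦα : Φα = {v | v ∈ aRoots n ∧ (∑ i, v i * α i) = 0 ∧
        ∃ c : Fin n → ℤ, v = (∑ m, (c m : ℝ) • sroot n m) ∧ c ⟨k - 1, by omega⟩ = 1})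
    (Stab : Set (Equiv.Perm (Fin (n + 1))))
    (hStab : Stab = {σ | σ ⟨k - 1, by omega⟩ = ⟨k - 1, by omega⟩ ∧
        σ ⟨k, by omega⟩ = ⟨k, by omega⟩ ∧
        ∀ i : Fin (n + 1), i.val < k → (σ i).val < k}) :
    Φα = {v | ∃ i j : Fin (n + 1), i.val + 2 ≤ k ∧ k + 1 ≤ j.val ∧
        v = Pi.single i (1 : ℝ) - Pi.single j (1 : ℝ)} ∧
    ∀ u ∈ Φα, ∀ v ∈ Φα, ∃ σ ∈ Stab, (fun i => u (σ⁻¹ i)) = v := by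
  have hset : Φα = {v | ∃ i j : Fin (n + 1), i.val + 2 ≤ k ∧ k + 1 ≤ j.val ∧
      v = Pi.single i (1 : ℝ) - Pi.single j (1 : ℝ)} := by
    ext v
    simp only [hΦα, Set.mem_setOf_eq, aRoots]
    constructor
    · rintro ⟨⟨i, j, hij, rfl⟩, horth, c, hc, hc1⟩
      refine ⟨i, j, ?_, ?_, rfl⟩
      all_goals {
        have h1 := coeff_eq _ c hc ⟨k - 1, by omega⟩
        rw [hc1] at h1
        rw [Finset.sum_congr rfl (fun t _ => Pi.sub_apply _ _ t), Finset.sum_sub_distrib,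
          sum_single_filter, sum_single_filter] at h1
        simp only [Fin.val_mk] at h1
        have h2 : i.val ≤ k - 1 ∧ k ≤ j.val := by
          split_ifs at h1 <;> norm_num at h1 <;> omega
        rw [hα, dot_sroot] at horth
        simp only [Fin.castSucc_mk, Fin.succ_mk, Pi.sub_apply, Pi.single_apply,
          Fin.ext_iff] at horth
        have hji : j.val ≠ i.val := fun h => hij (Fin.ext h.symm)
        split_ifs at horth <;> norm_num at horth <;> omega
      }
    · rintro ⟨i, j, hi, hj, rfl⟩
      have hij : i.val < j.val := by omega
      refine ⟨⟨i, j, Fin.ne_of_val_ne (by omega), rfl⟩, ?_,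
        ⟨fun m => if i.val ≤ m.val ∧ m.val < j.val then 1 else 0, ?_, ?_⟩⟩
      · rw [hα, dot_sroot]
        simp only [Fin.castSucc_mk, Fin.succ_mk, Pi.sub_apply, Pi.single_apply, Fin.ext_iff]
        split_ifs <;> norm_num <;> omega
      · exact_mod_cast expand i j hij
      · have hcond : i.val ≤ k - 1 ∧ k - 1 < j.val := ⟨by omega, by omega⟩
        simp [hcond]
  refine ⟨hset, ?_⟩
  intro u hu v hv
  rw [hset] at hu hv
  obtain ⟨i, j, hi, hj, rfl⟩ := hu
  obtain ⟨i', j', hi', hj', rfl⟩ := hv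
  have hjn : j.val ≤ n ∧ j'.val ≤ n := ⟨by omega, by omega⟩
  set σ : Equiv.Perm (Fin (n+1)) := Equiv.swap i i' * Equiv.swap j j' with hσ
  have hne : ∀ a b : Fin (n+1), a.val ≠ b.val → a ≠ b := fun a b h => Fin.ne_of_val_ne h
  have hσi : σ i = i' := by
    have h1 : Equiv.swap j j' i = i :=
      Equiv.swap_apply_of_ne_of_ne (hne i j (by omega)) (hne i j' (by omega))
    rw [hσ, Equiv.Perm.mul_apply, h1, Equiv.swap_apply_left]
  have hσj : σ j = j' := by
    have h1 : Equiv.swap j j' j = j' := Equiv.swap_apply_left j j'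
    have h2 : Equiv.swap i i' j' = j' :=
      Equiv.swap_apply_of_ne_of_ne (hne j' i (by omega)) (hne j' i' (by omega))
    rw [hσ, Equiv.Perm.mul_apply, h1, h2]
  refine ⟨σ, ?_, ?_⟩
  · rw [hStab]
    have fix : ∀ x : Fin (n+1), x.val = k - 1 ∨ x.val = k → σ x = x := by
      intro x hx
      have h1 : Equiv.swap j j' x = x :=
        Equiv.swap_apply_of_ne_of_ne (hne x j (by omega)) (hne x j' (by omega))
      have h2 : Equiv.swap i i' x = x :=
        Equiv.swap_apply_of_ne_of_ne (hne x i (by omega)) (hne x i' (by omega))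
      rw [hσ, Equiv.Perm.mul_apply, h1, h2]
    refine ⟨fix _ (Or.inl rfl), fix _ (Or.inr rfl), ?_⟩
    intro x hx
    have h1 : Equiv.swap j j' x = x :=
      Equiv.swap_apply_of_ne_of_ne (hne x j (by omega)) (hne x j' (by omega))
    rw [hσ, Equiv.Perm.mul_apply, h1]
    rcases eq_or_ne x i with rfl | h1'
    · rw [Equiv.swap_apply_left]; omega
    · rcases eq_or_ne x i' with rfl | h2'
      · rw [Equiv.swap_apply_right]; omega
      · rw [Equiv.swap_apply_of_ne_of_ne h1' h2']; exact hx
  · funext t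
    simp only [Pi.sub_apply, Pi.single_apply]
    have e1 : (σ⁻¹ t = i) ↔ (t = i') := by
      rw [← hσi]; exact ⟨fun h => by rw [← h]; simp, fun h => by rw [h]; simp⟩
    have e2 : (σ⁻¹ t = j) ↔ (t = j') := by
      rw [← hσj]; exact ⟨fun h => by rw [← h]; simp, fun h => by rw [h]; simp⟩
    simp only [e1, e2]


end PaperA
end

section
/- Let Φ be a reduced crystallographic simply-laced root system with base Δ, let α, β ∈ Δ be simple roots with ⟨α,β⟩ = −1 (adjacent simple roots), and let λ be a root with c_α(λ) = 0. Then ⟨λ,α⟩·⟨λ,β⟩ ≤ 0. -/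
open scoped InnerProductSpace

namespace PaperRS

variable {E : Type*} [NormedAddCommGroup E] [InnerProductSpace ℝ E]

variable {Φ : Set E}

lemma zero_coeffs (B : Base Φ) (c : E → ℝ)
    (h : ∑ γ ∈ B.Δ, c γ • γ = 0) : ∀ γ ∈ B.Δ, c γ = 0 := by
  intro γ hγ
  refine linearIndependent_iff'.mp B.indep Finset.univ (fun x => c x) ?_ ⟨γ, hγ⟩
    (Finset.mem_univ _)
  rw [Finset.univ_eq_attach]
  rw [Finset.sum_attach B.Δ (fun x => c x • x)]
  exact h

lemma coeff_eq (B : Base Φ) {δ : E} (hδ : δ ∈ Φ) (c : E → ℝ)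
    (h : δ = ∑ γ ∈ B.Δ, c γ • γ) :
    ∀ γ ∈ B.Δ, (B.coeff δ γ : ℝ) = c γ := by
  intro γ hγ
  have h0 : ∑ γ ∈ B.Δ, ((B.coeff δ γ : ℝ) - c γ) • γ = 0 := by
    simp only [sub_smul, Finset.sum_sub_distrib]
    rw [← B.expand δ hδ, ← h, sub_self]
  have := zero_coeffs B (fun γ => (B.coeff δ γ : ℝ) - c γ) h0 γ hγ
  have this : (B.coeff δ γ : ℝ) - c γ = 0 := this
  linarith

lemma eq_of_inner_two_s10 {μ β : E} (hμμ : ⟪μ, μ⟫_ℝ = 2) (hββ : ⟪β, β⟫_ℝ = 2)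
    (h : ⟪μ, β⟫_ℝ = 2) : μ = β := by
  have h0 : ⟪μ - β, μ - β⟫_ℝ = 0 := by
    rw [inner_sub_left, inner_sub_right, inner_sub_right, real_inner_comm μ β]
    rw [hμμ, hββ, h]; ring
  exact sub_eq_zero.mp (inner_self_eq_zero.mp h0)

/-- If `α, β` are adjacent simple roots (`⟪α, β⟫ = -1`) and `λ` is a root with
`α`-coefficient `0`, then `⟪λ, α⟫ ⬝ ⟪λ, β⟫ ≤ 0`. -/
theorem pairing_product_nonpos
    (hΦ : IsRootSystem Φ) (B : Base Φ)
    {α β : E} (hα : α ∈ B.Δ) (hβ : β ∈ B.Δ) (hadj : ⟪α, β⟫_ℝ = -1)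
    {l : E} (hl : l ∈ Φ) (hc : B.coeff l α = 0) :
    ⟪l, α⟫_ℝ * ⟪l, β⟫_ℝ ≤ 0 := by
  classical
  by_contra hpos
  push_neg at hpos
  have hαΦ : α ∈ Φ := B.subset hα
  have hβΦ : β ∈ Φ := B.subset hβ
  have hll : ⟪l, l⟫_ℝ = 2 := hΦ.norm_two l hl
  have haa : ⟪α, α⟫_ℝ = 2 := hΦ.norm_two α hαΦ
  have hbb : ⟪β, β⟫_ℝ = 2 := hΦ.norm_two β hβΦ
  have hαβ : α ≠ β := by
    intro h; rw [h, hbb] at hadj; norm_num at hadj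
  obtain ⟨na, hna⟩ := hΦ.cartan_int l hl α hαΦ
  obtain ⟨nb, hnb⟩ := hΦ.cartan_int l hl β hβΦ
  -- bounds on na, nb
  have hba : ⟪β, α⟫_ℝ = -1 := by rw [real_inner_comm]; exact hadj
  have hnub : (nb : ℝ) ≤ 2 ∧ (-2 : ℝ) ≤ (nb : ℝ) := by
    have h1 : (0:ℝ) ≤ ⟪l - β, l - β⟫_ℝ := real_inner_self_nonneg
    have h2 : (0:ℝ) ≤ ⟪l + β, l + β⟫_ℝ := real_inner_self_nonneg
    rw [inner_sub_left, inner_sub_right, inner_sub_right, real_inner_comm l β,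
      hll, hbb, hnb] at h1
    rw [inner_add_left, inner_add_right, inner_add_right, real_inner_comm l β,
      hll, hbb, hnb] at h2
    constructor <;> linarith
  have hnua : (na : ℝ) ≤ 2 ∧ (-2 : ℝ) ≤ (na : ℝ) := by
    have h1 : (0:ℝ) ≤ ⟪l - α, l - α⟫_ℝ := real_inner_self_nonneg
    have h2 : (0:ℝ) ≤ ⟪l + α, l + α⟫_ℝ := real_inner_self_nonneg
    rw [inner_sub_left, inner_sub_right, inner_sub_right, real_inner_comm l α,
      hll, haa, hna] at h1
    rw [inner_add_left, inner_add_right, inner_add_right, real_inner_comm l α,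
      hll, haa, hna] at h2
    constructor <;> linarith
  -- l ≠ ±α since coeff l α = 0
  have hlα : l ≠ α := by
    intro h
    have := coeff_eq B hl (fun γ => if γ = α then (1:ℝ) else 0)
      (by rw [h]; simp [Finset.sum_ite_eq', hα]) α hα
    simp [hc] at this
  have hlnα : l ≠ -α := by
    intro h
    have := coeff_eq B hl (fun γ => if γ = α then (-1:ℝ) else 0)
      (by rw [h]; simp [Finset.sum_ite_eq', hα]) α hα
    simp [hc] at this
  -- na ∈ {-1, 1}
  have hna0 : (na : ℝ) ≠ 0 := by
    intro h; rw [hna, h] at hpos; simp at hpos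
  have hna2 : (na : ℝ) ≠ 2 := by
    intro h
    exact hlα (eq_of_inner_two_s10 hll haa (hna.trans h))
  have hnan2 : (na : ℝ) ≠ -2 := by
    intro h
    have : ⟪l, -α⟫_ℝ = 2 := by rw [inner_neg_right, hna, h]; ring
    have hmm : ⟪-α, -α⟫_ℝ = 2 := by rw [inner_neg_neg]; exact haa
    exact hlnα (eq_of_inner_two_s10 hll hmm this)
  have hna1 : na = 1 ∨ na = -1 := by
    have h1 : na ≤ 2 := by exact_mod_cast hnua.1
    have h2 : -2 ≤ na := by exact_mod_cast hnua.2
    have h3 : na ≠ 0 := by exact_mod_cast hna0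
    have h4 : na ≠ 2 := by exact_mod_cast hna2
    have h5 : na ≠ -2 := by exact_mod_cast hnan2
    omega
  have hnb1 : nb ≤ 2 ∧ -2 ≤ nb := by
    constructor <;> [exact_mod_cast hnub.1; exact_mod_cast hnub.2]
  rcases hna1 with h1 | h1
  · -- na = 1, so nb > 0
    have hnbpos : 0 < nb := by
      by_contra hn
      push_neg at hn
      have : (nb : ℝ) ≤ 0 := by exact_mod_cast hn
      rw [hna, hnb, h1] at hpos
      push_cast at hpos
      linarith
    rcases (by omega : nb = 1 ∨ nb = 2) with h2 | h2
    · -- μ = l - α is a root with ⟪μ, β⟫ = 2, so μ = β, l = α + β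
      have hμΦ : l - α ∈ Φ := by
        have := hΦ.reflect_mem α hαΦ l hl
        rw [hna, h1] at this; simpa using this
      have hμμ : ⟪l - α, l - α⟫_ℝ = 2 := hΦ.norm_two _ hμΦ
      have hμβ : ⟪l - α, β⟫_ℝ = 2 := by
        rw [inner_sub_left, hnb, hadj, h2]; push_cast; ring
      have hlab : l = α + β := by
        have := eq_of_inner_two_s10 hμμ hbb hμβ
        linear_combination (norm := module) this
      have := coeff_eq B hl
        (fun γ => (if γ = α then (1:ℝ) else 0) + (if γ = β then (1:ℝ) else 0))
        (by rw [hlab]; simp [add_smul, Finset.sum_add_distrib, Finset.sum_ite_eq', hα, hβ])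
        α hα
      simp [hc, hαβ] at this
    · -- nb = 2 ⇒ l = β ⇒ ⟪l,α⟫ = -1 ≠ 1
      have : l = β := eq_of_inner_two_s10 hll hbb (by rw [hnb, h2]; norm_num)
      rw [this, hba, h1] at hna
      norm_num at hna
  · -- na = -1, so nb < 0
    have hnbneg : nb < 0 := by
      by_contra hn
      push_neg at hn
      have : (0:ℝ) ≤ (nb : ℝ) := by exact_mod_cast hn
      rw [hna, hnb, h1] at hpos
      push_cast at hpos
      linarith
    rcases (by omega : nb = -1 ∨ nb = -2) with h2 | h2
    · have hμΦ : l + α ∈ Φ := by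
        have := hΦ.reflect_mem α hαΦ l hl
        rw [hna, h1] at this
        have h' : l - (-1 : ℝ) • α = l + α := by module
        rwa [show ((-1 : ℤ) : ℝ) = (-1 : ℝ) by norm_num, h'] at this
      have hμμ : ⟪l + α, l + α⟫_ℝ = 2 := hΦ.norm_two _ hμΦ
      have hnb' : ⟪l + α, -β⟫_ℝ = 2 := by
        rw [inner_neg_right, inner_add_left, hnb, hadj, h2]; push_cast; ring
      have hnbb : ⟪-β, -β⟫_ℝ = 2 := by rw [inner_neg_neg]; exact hbb
      have hlab : l = -α - β := by
        have := eq_of_inner_two_s10 hμμ hnbb hnb'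
        linear_combination (norm := module) this
      have := coeff_eq B hl
        (fun γ => (if γ = α then (-1:ℝ) else 0) + (if γ = β then (-1:ℝ) else 0))
        (by rw [hlab]; simp [add_smul, Finset.sum_add_distrib, Finset.sum_ite_eq', hα, hβ]
            module)
        α hα
      simp [hc, hαβ] at this
    · have hlb : l = -β := by
        have h' : ⟪l, -β⟫_ℝ = 2 := by rw [inner_neg_right, hnb, h2]; norm_num
        have hnbb : ⟪-β, -β⟫_ℝ = 2 := by rw [inner_neg_neg]; exact hbb
        exact eq_of_inner_two_s10 hll hnbb h'
      rw [hlb, inner_neg_left, hba, h1] at hna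
      norm_num at hna

end PaperRS
end

section
/- Let Φ be an irreducible reduced crystallographic simply-laced root system with base Δ and highest root θ; let α ∈ Δ be an extreme Heisenberg root with neighbour β, and set δ := θ − α − β. If λ is a root with c_α(λ) = 0 and ⟨λ,α⟩ ≠ 0 such that δ + λ ∈ Ψ_α (i.e. δ + λ is a root with c_α(δ+λ) = 1 and ⟨δ+λ, α⟩ ≤ 0), then λ = β. -/
open scoped InnerProductSpace

namespace PaperRS

variable {E : Type*} [NormedAddCommGroup E] [InnerProductSpace ℝ E]

variable {Φ : Set E}

/-- Uniqueness of the simple-root coefficients of a root, from linear independence. -/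
private lemma coeff_eq_s11 (B : Base Φ) {v : E} (hv : v ∈ Φ) (d : E → ℝ)
    (h : v = ∑ γ ∈ B.Δ, d γ • γ) {σ : E} (hσ : σ ∈ B.Δ) :
    (B.coeff v σ : ℝ) = d σ := by
  have hz : ∑ i : {x : E // x ∈ B.Δ}, ((B.coeff v (i : E) : ℝ) - d (i : E)) • (i : E) = 0 := by
    rw [Finset.sum_coe_sort B.Δ (fun γ => ((B.coeff v γ : ℝ) - d γ) • γ)]
    simp only [sub_smul, Finset.sum_sub_distrib, ← B.expand v hv, ← h, sub_self]
  have := Fintype.linearIndependent_iff.mp B.indep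
    (fun i => (B.coeff v (i : E) : ℝ) - d (i : E)) hz ⟨σ, hσ⟩
  have h' : (B.coeff v σ : ℝ) - d σ = 0 := this
  linarith

open Classical in
private lemma ite_sum_simple (B : Base Φ) {σ : E} (hσ : σ ∈ B.Δ) :
    ∑ γ ∈ B.Δ, (if γ = σ then (1 : ℝ) else 0) • γ = σ := by
  simp [ite_smul, Finset.sum_ite_eq', hσ]

/-- For an extreme Heisenberg root `α` with neighbour `β` and `δ := θ - α - β`:
if `λ` is a root with `c_α(λ) = 0`, `⟪λ, α⟫ ≠ 0` and `δ + λ ∈ Ψ_α`, then `λ = β`. -/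
theorem lam_eq_beta_of_delta_add_mem_psiSet
    (hΦ : IsRootSystem Φ) (hirr : IsIrreducible Φ) (B : Base Φ)
    {θ α β : E} (hθ : IsHighest B θ) (hα : α ∈ B.Δ)
    (hext : IsExtreme B α β) (hH : IsHeisenberg B θ α)
    {l : E} (hl : l ∈ Φ) (hc : B.coeff l α = 0) (hne : ⟪l, α⟫_ℝ ≠ 0)
    (hmem : θ - α - β + l ∈ PsiSet B α) :
    l = β := by
  classical
  obtain ⟨hθΦ, hθmax⟩ := hθ
  obtain ⟨hβΔ, hβneα, hαβne, huniq⟩ := hext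
  obtain ⟨hθ2, hHeis⟩ := hH
  obtain ⟨hμΦ, hμc, hμa⟩ := hmem
  have hαΦ : α ∈ Φ := B.subset hα
  have hβΦ : β ∈ Φ := B.subset hβΔ
  -- `-θ ∈ Φ` and its `α`-coefficient is `-2`
  have hnegθΦ : -θ ∈ Φ := by
    have h := hΦ.reflect_mem θ hθΦ θ hθΦ
    rw [hΦ.norm_two θ hθΦ] at h
    have e : θ - (2 : ℝ) • θ = -θ := by rw [two_smul]; abel
    rwa [e] at h
  have hnegθexp : -θ = ∑ γ ∈ B.Δ, (-(B.coeff θ γ : ℝ)) • γ := by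
    simp only [neg_smul, Finset.sum_neg_distrib, ← B.expand θ hθΦ]
  have hcnegθ : (B.coeff (-θ) α : ℝ) = -(B.coeff θ α : ℝ) :=
    coeff_eq_s11 B hnegθΦ _ hnegθexp hα
  -- Step 1: `⟪θ, γ⟫ = 0` for every simple `γ ≠ α`
  have hθγ : ∀ γ ∈ B.Δ, γ ≠ α → ⟪θ, γ⟫_ℝ = 0 := by
    intro γ hγ hγα
    have hγΦ : γ ∈ Φ := B.subset hγ
    obtain ⟨n, hn⟩ := hΦ.cartan_int θ hθΦ γ hγΦ
    have hwΦ : θ - ⟪θ, γ⟫_ℝ • γ ∈ Φ := hΦ.reflect_mem γ hγΦ θ hθΦ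
    have hwexp : θ - ⟪θ, γ⟫_ℝ • γ =
        ∑ γ' ∈ B.Δ, ((B.coeff θ γ' : ℝ) - if γ' = γ then (n : ℝ) else 0) • γ' := by
      simp only [sub_smul, Finset.sum_sub_distrib, ← B.expand θ hθΦ, hn]
      congr 1
      simp [ite_smul, Finset.sum_ite_eq', hγ]
    have hcw : (B.coeff (θ - ⟪θ, γ⟫_ℝ • γ) α : ℝ) = 2 := by
      have hx := coeff_eq_s11 B hwΦ _ hwexp hα
      simp only [Ne.symm hγα, if_false, sub_zero] at hx
      rw [hx]; exact_mod_cast hθ2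
    have hw : θ - ⟪θ, γ⟫_ℝ • γ = θ := by
      by_contra hne'
      rcases eq_or_ne (θ - ⟪θ, γ⟫_ℝ • γ) (-θ) with h' | h''
      · rw [h'] at hcw
        rw [hcnegθ] at hcw
        push_cast [hθ2] at hcw
        norm_num at hcw
      · rcases hHeis _ hwΦ hne' h'' with h | h | h <;> rw [h] at hcw <;> norm_num at hcw
    have h0 : ⟪θ, γ⟫_ℝ • γ = 0 := by
      have := sub_eq_self.mp hw
      exact this
    rcases smul_eq_zero.mp h0 with h | h
    · exact h
    · exact absurd (h ▸ hγΦ) hΦ.nonzero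
  -- Step 2: `⟪θ, α⟫ = 1`
  have hθα : ⟪θ, α⟫_ℝ = 1 := by
    have h2 : ⟪θ, θ⟫_ℝ = 2 := hΦ.norm_two θ hθΦ
    have hx : ⟪θ, θ⟫_ℝ = ∑ γ ∈ B.Δ, (B.coeff θ γ : ℝ) * ⟪θ, γ⟫_ℝ := by
      nth_rewrite 2 [B.expand θ hθΦ]
      rw [inner_sum]
      simp [real_inner_smul_right]
    rw [Finset.sum_eq_single α (fun b hb hbα => by rw [hθγ b hb hbα]; ring)
      (fun habs => absurd hα habs)] at hx
    rw [h2] at hx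
    have : (B.coeff θ α : ℝ) = 2 := by exact_mod_cast hθ2
    rw [this] at hx
    linarith
  -- Step 3: `⟪β, α⟫ = -1`
  have hβα : ⟪β, α⟫_ℝ = -1 := by
    obtain ⟨n, hn⟩ := hΦ.cartan_int β hβΦ α hαΦ
    have hn' : ⟪α, β⟫_ℝ = (n : ℝ) := by rw [real_inner_comm]; exact hn
    have e1 : ⟪β - α, β - α⟫_ℝ = 4 - 2 * n := by
      simp only [inner_sub_left, inner_sub_right, hn, hn',
        hΦ.norm_two β hβΦ, hΦ.norm_two α hαΦ]
      ring
    have e2 : ⟪β + α, β + α⟫_ℝ = 4 + 2 * n := by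
      simp only [inner_add_left, inner_add_right, hn, hn',
        hΦ.norm_two β hβΦ, hΦ.norm_two α hαΦ]
      ring
    have p1 : (0 : ℝ) ≤ 4 - 2 * n := e1 ▸ real_inner_self_nonneg
    have p2 : (0 : ℝ) ≤ 4 + 2 * n := e2 ▸ real_inner_self_nonneg
    have hub : n ≤ 2 := by exact_mod_cast (by linarith : (n : ℝ) ≤ 2)
    have hlb : -2 ≤ n := by exact_mod_cast (by linarith : (-2 : ℝ) ≤ (n : ℝ))
    have hn0 : n ≠ 0 := by
      intro h0
      apply hαβne
      rw [hn', h0]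
      norm_num
    interval_cases n
    · -- n = -2 : β = -α, contradicts coefficient uniqueness
      exfalso
      have hz : ⟪β + α, β + α⟫_ℝ = 0 := by rw [e2]; norm_num
      have hba : β = -α :=
        eq_neg_of_add_eq_zero_left (inner_self_eq_zero.mp hz)
      have c1 : (B.coeff β α : ℝ) = if α = β then (1 : ℝ) else 0 :=
        coeff_eq_s11 B hβΦ _ (ite_sum_simple B hβΔ).symm hα
      have c2 : (B.coeff β α : ℝ) = -(if α = α then (1 : ℝ) else 0) := by
        refine coeff_eq_s11 B hβΦ (fun γ => -(if γ = α then (1 : ℝ) else 0)) ?_ hα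
        rw [hba]
        simp only [neg_smul, Finset.sum_neg_distrib]
        rw [ite_sum_simple B hα]
      have hne2 : ¬ (α = β) := fun h => hβneα h.symm
      simp only [hne2, if_false] at c1
      simp only [if_pos rfl] at c2
      rw [c1] at c2
      norm_num at c2
    · -- n = -1 : done
      rw [hn]; norm_num
    · exact absurd rfl hn0
    · -- n = 1 : β - α ∈ Φ contradicts the sign property
      exfalso
      have hr : β - α ∈ Φ := by
        have h := hΦ.reflect_mem α hαΦ β hβΦ
        rwa [hn, Int.cast_one, one_smul] at h
      have hexp : β - α = ∑ γ ∈ B.Δ,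
          ((if γ = β then (1 : ℝ) else 0) - (if γ = α then (1 : ℝ) else 0)) • γ := by
        simp only [sub_smul, Finset.sum_sub_distrib, ite_sum_simple B hβΔ, ite_sum_simple B hα]
      have cα : (B.coeff (β - α) α : ℝ) = -1 := by
        have hx := coeff_eq_s11 B hr _ hexp hα
        have hne2 : ¬ (α = β) := fun h => hβneα h.symm
        simp only [hne2, if_false, if_pos rfl] at hx
        rw [hx]; norm_num
      have cβ : (B.coeff (β - α) β : ℝ) = 1 := by
        have hx := coeff_eq_s11 B hr _ hexp hβΔ
        simp only [hβneα, if_false, if_pos rfl] at hx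
        rw [hx]; norm_num
      have cαz : B.coeff (β - α) α = -1 := by exact_mod_cast cα
      have cβz : B.coeff (β - α) β = 1 := by exact_mod_cast cβ
      rcases B.sign _ hr with h | h
      · have := h α hα; omega
      · have := h β hβΔ; omega
    · -- n = 2 : β = α, contradiction
      exfalso
      have hz : ⟪β - α, β - α⟫_ℝ = 0 := by rw [e1]; norm_num
      exact hβneα (sub_eq_zero.mp (inner_self_eq_zero.mp hz))
  -- Step 4: `⟪l, α⟫ = -1`
  obtain ⟨m, hm⟩ := hΦ.cartan_int l hl α hαΦ
  have hμinner : ⟪θ - α - β + l, α⟫_ℝ = (m : ℝ) := by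
    simp only [inner_add_left, inner_sub_left, hθα, hΦ.norm_two α hαΦ, hβα, hm]
    ring
  have hlα : ⟪l, α⟫_ℝ = -1 := by
    have hm' : ⟪α, l⟫_ℝ = (m : ℝ) := by rw [real_inner_comm]; exact hm
    have e2 : ⟪l + α, l + α⟫_ℝ = 4 + 2 * m := by
      simp only [inner_add_left, inner_add_right, hm, hm',
        hΦ.norm_two l hl, hΦ.norm_two α hαΦ]
      ring
    have p2 : (0 : ℝ) ≤ 4 + 2 * m := e2 ▸ real_inner_self_nonneg
    have hlb : -2 ≤ m := by exact_mod_cast (by linarith : (-2 : ℝ) ≤ (m : ℝ))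
    have hub : m ≤ 0 := by
      have : (m : ℝ) ≤ 0 := hμinner ▸ hμa
      exact_mod_cast this
    have hm0 : m ≠ 0 := by
      intro h0; apply hne; rw [hm, h0]; norm_num
    interval_cases m
    · -- m = -2 : l = -α, contradicts coeff l α = 0
      exfalso
      have hz : ⟪l + α, l + α⟫_ℝ = 0 := by rw [e2]; norm_num
      have hla : l = -α :=
        eq_neg_of_add_eq_zero_left (inner_self_eq_zero.mp hz)
      have c2 : (B.coeff l α : ℝ) = -(if α = α then (1 : ℝ) else 0) := by
        refine coeff_eq_s11 B hl (fun γ => -(if γ = α then (1 : ℝ) else 0)) ?_ hα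
        rw [hla]
        simp only [neg_smul, Finset.sum_neg_distrib]
        rw [ite_sum_simple B hα]
      rw [hc] at c2
      norm_num at c2
    · rw [hm]; norm_num
    · exact absurd rfl hm0
  -- Step 5: reflect `μ` in `α` to land on `θ`
  have hμα : ⟪θ - α - β + l, α⟫_ℝ = -1 := by
    have : (m : ℝ) = -1 := by rw [← hm, hlα]
    rw [hμinner, this]
  have hwΦ : θ - β + l ∈ Φ := by
    have h := hΦ.reflect_mem α hαΦ _ hμΦ
    rw [hμα] at h
    have e : (θ - α - β + l) - (-1 : ℝ) • α = θ - β + l := by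
      rw [neg_smul, one_smul, sub_neg_eq_add]; abel
    rwa [e] at h
  have hwexp : θ - β + l = ∑ γ ∈ B.Δ,
      ((B.coeff (θ - α - β + l) γ : ℝ) + if γ = α then (1 : ℝ) else 0) • γ := by
    simp only [add_smul, Finset.sum_add_distrib, ← B.expand _ hμΦ, ite_sum_simple B hα]
    abel
  have hcw : (B.coeff (θ - β + l) α : ℝ) = 2 := by
    have hx := coeff_eq_s11 B hwΦ _ hwexp hα
    simp only [if_pos rfl] at hx
    rw [hx]
    have : (B.coeff (θ - α - β + l) α : ℝ) = 1 := by exact_mod_cast hμc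
    rw [this]; norm_num
  have hw : θ - β + l = θ := by
    by_contra hne'
    rcases eq_or_ne (θ - β + l) (-θ) with h' | h''
    · rw [h'] at hcw
      rw [hcnegθ] at hcw
      push_cast [hθ2] at hcw
      norm_num at hcw
    · rcases hHeis _ hwΦ hne' h'' with h | h | h <;> rw [h] at hcw <;> norm_num at hcw
  have : l - β = (θ - β + l) - θ := by abel
  rw [hw, sub_self] at this
  exact sub_eq_zero.mp this

end PaperRS
end
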